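/- arXiv:2012.06507 — 8 statements merged into one kernel-verified Lean document; each statement's English description precedes it below -/
import Mathlib

section
/- Let k be a positive integer and let P = k×k be the 2-dimensional grid poset on pairs (i,j) with 0 ≤ i,j ≤ k-1 ordered componentwise. Define I₁ to be the set of pairs ((i+1,0),(i,k-1)) for 0 ≤ i ≤ k-2, and I₂ to be the set of pairs ((0,j+1),(k-1,j)) for 0 ≤ j ≤ k-2. Then no linear extension of P can simultaneously reverse a pair from I₁ and a pair from I₂; i.e., if L is a linear extension of P, (x₁,y₁) ∈ I₁ and (x₂,y₂) ∈ I₂, then it is not the case that both y₁ < x₁ in L and y₂ < x₂ in L. -/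
/-- In the grid poset `Fin k × Fin k` (componentwise order), no linear
extension `L` can simultaneously reverse a pair from
`I₁ = {((i+1,0),(i,k-1)) : 0 ≤ i ≤ k-2}` and a pair from
`I₂ = {((0,j+1),(k-1,j)) : 0 ≤ j ≤ k-2}`. -/
theorem stmt_0 (k : ℕ) (hk : 0 < k)
    (L : Fin k × Fin k → Fin k × Fin k → Prop)
    (hlin : IsLinearOrder (Fin k × Fin k) L)
    (hext : ∀ x y : Fin k × Fin k, x ≤ y → L x y)
    (i j : ℕ) (hi : i + 1 ≤ k - 1) (hj : j + 1 ≤ k - 1) :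
    ¬ (L (⟨i, by omega⟩, ⟨k - 1, by omega⟩) (⟨i + 1, by omega⟩, ⟨0, hk⟩)
        ∧ (⟨i, by omega⟩, (⟨k - 1, by omega⟩ : Fin k))
            ≠ ((⟨i + 1, by omega⟩ : Fin k), ⟨0, hk⟩)
        ∧ L (⟨k - 1, by omega⟩, ⟨j, by omega⟩) (⟨0, hk⟩, ⟨j + 1, by omega⟩)
        ∧ ((⟨k - 1, by omega⟩ : Fin k), (⟨j, by omega⟩ : Fin k))
            ≠ (⟨0, hk⟩, ⟨j + 1, by omega⟩)) := by
  rintro ⟨h1, hne1, h2, hne2⟩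
  have htrans := hlin.toIsPartialOrder.toIsPreorder.toIsTrans.trans
  have hanti := hlin.toIsPartialOrder.toAntisymm.antisymm
  -- (i+1,0) ≤ (k-1,j) in the product order
  have ha : L (⟨i + 1, by omega⟩, (⟨0, hk⟩ : Fin k)) (⟨k - 1, by omega⟩, ⟨j, by omega⟩) := by
    apply hext
    constructor <;> simp [Fin.le_def] <;> omega
  -- (0,j+1) ≤ (i,k-1)
  have hb : L ((⟨0, hk⟩ : Fin k), ⟨j + 1, by omega⟩) (⟨i, by omega⟩, ⟨k - 1, by omega⟩) := by
    apply hext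
    constructor <;> simp [Fin.le_def] <;> omega
  have hc : L (⟨i + 1, by omega⟩, (⟨0, hk⟩ : Fin k)) (⟨i, by omega⟩, ⟨k - 1, by omega⟩) :=
    htrans _ _ _ (htrans _ _ _ ha h2) hb
  exact hne1 (hanti _ _ h1 hc)
end

section
/- Let k ≥ 2 and let P = k×k be the 2-dimensional grid poset on pairs (i,j) with 0 ≤ i,j ≤ k-1. Then P has exactly one realizer of size two: the pair consisting of the lexicographic order on pairs and the colexicographic order on pairs (reading coordinates right-to-left). That is, if {L₁, L₂} is a set of two linear extensions of P whose intersection is the partial order of P, then {L₁, L₂} = {lex, colex}. -/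
namespace Stmt1Aux

private lemma rel_eq_of {α : Type*} {M N : α → α → Prop}
    (hanti : ∀ {x y}, M x y → M y x → x = y)
    (htot : ∀ x y, N x y ∨ N y x) (h : ∀ x y, N x y → M x y) : M = N := by
  funext x y
  apply propext
  constructor
  · intro hm
    rcases htot x y with hn | hn
    · exact hn
    · obtain rfl := hanti hm (h _ _ hn)
      rcases htot x x with hn' | hn' <;> exact hn'
  · exact h x y

lemma grid_key (k : ℕ) (hk : 2 ≤ k)
    (L₁ L₂ : Fin k × Fin k → Fin k × Fin k → Prop)
    (h₁ : IsLinearOrder (Fin k × Fin k) L₁)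
    (h₂ : IsLinearOrder (Fin k × Fin k) L₂)
    (hext₁ : ∀ x y : Fin k × Fin k, x ≤ y → L₁ x y)
    (hext₂ : ∀ x y : Fin k × Fin k, x ≤ y → L₂ x y)
    (hreal : ∀ x y : Fin k × Fin k, (L₁ x y ∧ L₂ x y) ↔ x ≤ y)
    (hbase : L₁ ((⟨0, by omega⟩ : Fin k), (⟨1, by omega⟩ : Fin k))
                ((⟨1, by omega⟩ : Fin k), (⟨0, by omega⟩ : Fin k))) :
    (L₁ = fun p q => p.1 < q.1 ∨ (p.1 = q.1 ∧ p.2 ≤ q.2)) ∧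
    (L₂ = fun p q => p.2 < q.2 ∨ (p.2 = q.2 ∧ p.1 ≤ q.1)) := by
  set o : Fin k × Fin k := ((⟨0, by omega⟩ : Fin k), (⟨1, by omega⟩ : Fin k)) with ho
  set t : Fin k × Fin k := ((⟨1, by omega⟩ : Fin k), (⟨0, by omega⟩ : Fin k)) with ht
  have tot₁ : ∀ x y, L₁ x y ∨ L₁ y x := h₁.toTotal.total
  have tot₂ : ∀ x y, L₂ x y ∨ L₂ y x := h₂.toTotal.total
  have trans₁ : ∀ {x y z}, L₁ x y → L₁ y z → L₁ x z :=
    fun hxy hyz => h₁.toIsPartialOrder.toIsPreorder.toIsTrans.trans _ _ _ hxy hyz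
  have trans₂ : ∀ {x y z}, L₂ x y → L₂ y z → L₂ x z :=
    fun hxy hyz => h₂.toIsPartialOrder.toIsPreorder.toIsTrans.trans _ _ _ hxy hyz
  have anti₁ : ∀ {x y}, L₁ x y → L₁ y x → x = y :=
    fun hxy hyx => h₁.toIsPartialOrder.toAntisymm.antisymm _ _ hxy hyx
  have anti₂ : ∀ {x y}, L₂ x y → L₂ y x → x = y :=
    fun hxy hyx => h₂.toIsPartialOrder.toAntisymm.antisymm _ _ hxy hyx
  -- swap lemmas
  have swap12 : ∀ {x y}, ¬ y ≤ x → L₁ y x → L₂ x y := by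
    intro x y hle hL
    rcases tot₂ x y with h | h
    · exact h
    · exact absurd ((hreal y x).mp ⟨hL, h⟩) hle
  -- step lemmas
  have step_right : ∀ {x y z : Fin k × Fin k}, ¬ x ≤ y → ¬ y ≤ x → ¬ x ≤ z → ¬ z ≤ x →
      y ≤ z → (L₁ x y ↔ L₁ x z) := by
    intro x y z hxy hyx hxz hzx hyz
    constructor
    · intro h; exact trans₁ h (hext₁ _ _ hyz)
    · intro h
      by_contra hc
      have hyx1 : L₁ y x := (tot₁ x y).resolve_left hc
      have h2xy : L₂ x y := swap12 hyx hyx1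
      have h2zx : L₂ z x := swap12 hxz h
      have h2zy : L₂ z y := trans₂ h2zx h2xy
      obtain rfl := anti₂ (hext₂ _ _ hyz) h2zy
      exact hc h
  have step_left : ∀ {x x' y : Fin k × Fin k}, ¬ x ≤ y → ¬ y ≤ x → ¬ x' ≤ y → ¬ y ≤ x' →
      x' ≤ x → (L₁ x y ↔ L₁ x' y) := by
    intro x x' y hxy hyx hx'y hyx' hxx'
    constructor
    · intro h; exact trans₁ (hext₁ _ _ hxx') h
    · intro h
      by_contra hc
      have hyx1 : L₁ y x := (tot₁ x y).resolve_left hc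
      have h2yx' : L₂ y x' := swap12 hx'y h
      have h2yx : L₂ y x := trans₂ h2yx' (hext₂ _ _ hxx')
      exact hyx ((hreal y x).mp ⟨hyx1, h2yx⟩)
  -- orientation of any incomparable pair equals that of the canonical pair
  have orient : ∀ x y : Fin k × Fin k, x.1.val < y.1.val → y.2.val < x.2.val →
      (L₁ x y ↔ L₁ o t) := by
    intro x y h1 h2
    have hk0 : 0 < k := by omega
    have hy1 : x.1.val + 1 < k := lt_of_le_of_lt h1 y.1.isLt
    set y1 : Fin k × Fin k := ((⟨x.1.val + 1, hy1⟩ : Fin k), (⟨0, hk0⟩ : Fin k)) with hy1'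
    have e1 : L₁ x y ↔ L₁ x y1 := by
      apply (step_right ?_ ?_ ?_ ?_ ?_).symm
      all_goals (simp only [hy1', ho, ht, Prod.le_def, Prod.fst, Prod.snd, Fin.le_def, Fin.mk_le_mk, not_and, not_le]; omega)
    have e2 : L₁ x y1 ↔ L₁ o y1 := by
      apply step_left
      all_goals (simp only [hy1', ho, ht, Prod.le_def, Prod.fst, Prod.snd, Fin.le_def, Fin.mk_le_mk, not_and, not_le]; omega)
    have e3 : L₁ o y1 ↔ L₁ o t := by
      apply (step_right ?_ ?_ ?_ ?_ ?_).symm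
      all_goals (simp only [hy1', ho, ht, Prod.le_def, Prod.fst, Prod.snd, Fin.le_def, Fin.mk_le_mk, not_and, not_le]; omega)
    exact (e1.trans e2).trans e3
  constructor
  · apply rel_eq_of anti₁
    · intro x y
      rcases lt_trichotomy x.1.val y.1.val with h | h | h
      · exact Or.inl (Or.inl (by exact h))
      · rcases Nat.le_total x.2.val y.2.val with h' | h'
        · exact Or.inl (Or.inr ⟨Fin.ext h, h'⟩)
        · exact Or.inr (Or.inr ⟨Fin.ext h.symm, h'⟩)
      · exact Or.inr (Or.inl (by exact h))
    · intro x y hlex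
      rcases hlex with h | ⟨h, h'⟩
      · rcases le_or_gt x.2.val y.2.val with h' | h'
        · exact hext₁ x y (Prod.le_def.mpr ⟨le_of_lt h, h'⟩)
        · exact (orient x y h h').mpr hbase
      · exact hext₁ x y (Prod.le_def.mpr ⟨le_of_eq h, h'⟩)
  · apply rel_eq_of anti₂
    · intro x y
      rcases lt_trichotomy x.2.val y.2.val with h | h | h
      · exact Or.inl (Or.inl (by exact h))
      · rcases Nat.le_total x.1.val y.1.val with h' | h'
        · exact Or.inl (Or.inr ⟨Fin.ext h, h'⟩)
        · exact Or.inr (Or.inr ⟨Fin.ext h.symm, h'⟩)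
      · exact Or.inr (Or.inl (by exact h))
    · intro x y hcolex
      rcases hcolex with h | ⟨h, h'⟩
      · rcases le_or_gt x.1.val y.1.val with h' | h'
        · exact hext₂ x y (Prod.le_def.mpr ⟨h', le_of_lt h⟩)
        · have h1 : L₁ y x := (orient y x h' h).mpr hbase
          apply swap12 ?_ h1
          intro hle
          exact absurd (Prod.le_def.mp hle).2 (not_le.mpr h)
      · exact hext₂ x y (Prod.le_def.mpr ⟨h', le_of_eq h⟩)

end Stmt1Aux

/-- For `k ≥ 2`, the grid `Fin k × Fin k` has exactly one two-element
realizer, namely `{lex, colex}`. -/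
theorem stmt_1 (k : ℕ) (hk : 2 ≤ k)
    (L₁ L₂ : Fin k × Fin k → Fin k × Fin k → Prop)
    (h₁ : IsLinearOrder (Fin k × Fin k) L₁)
    (h₂ : IsLinearOrder (Fin k × Fin k) L₂)
    (hext₁ : ∀ x y : Fin k × Fin k, x ≤ y → L₁ x y)
    (hext₂ : ∀ x y : Fin k × Fin k, x ≤ y → L₂ x y)
    (hreal : ∀ x y : Fin k × Fin k, (L₁ x y ∧ L₂ x y) ↔ x ≤ y) :
    (L₁ = fun p q => p.1 < q.1 ∨ (p.1 = q.1 ∧ p.2 ≤ q.2)) ∧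
      (L₂ = fun p q => p.2 < q.2 ∨ (p.2 = q.2 ∧ p.1 ≤ q.1)) ∨
    (L₁ = fun p q => p.2 < q.2 ∨ (p.2 = q.2 ∧ p.1 ≤ q.1)) ∧
      (L₂ = fun p q => p.1 < q.1 ∨ (p.1 = q.1 ∧ p.2 ≤ q.2)) := by
  set o : Fin k × Fin k := ((⟨0, by omega⟩ : Fin k), (⟨1, by omega⟩ : Fin k)) with ho
  set t : Fin k × Fin k := ((⟨1, by omega⟩ : Fin k), (⟨0, by omega⟩ : Fin k)) with ht
  rcases h₁.toTotal.total o t with hb | hb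
  · exact Or.inl (Stmt1Aux.grid_key k hk L₁ L₂ h₁ h₂ hext₁ hext₂ hreal hb)
  · have hnle : ¬ t ≤ o := by
      intro h
      exact absurd (Prod.le_def.mp h).1 (by simp [ho, ht, Fin.le_def])
    have hb2 : L₂ o t := by
      rcases h₂.toTotal.total o t with h | h
      · exact h
      · exact absurd ((hreal t o).mp ⟨hb, h⟩) hnle
    have h := Stmt1Aux.grid_key k hk L₂ L₁ h₂ h₁ hext₂ hext₁
      (fun x y => (and_comm.trans (hreal x y))) hb2
    exact Or.inr ⟨h.2, h.1⟩
end

section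
/- For every positive integer t, the class of t-dimensional grids has the Ramsey property for comparabilities: for all positive integers s and r, there exists n such that for every r-coloring of the set of comparable pairs {(a,b) : a < b in n^t}, there exists a subposet P' of n^t isomorphic to the grid s^t such that all comparable pairs of P' receive the same color. -/
open Finset

/-- Relative finite Ramsey property: every set `S` of naturals with at least `n`
elements contains, for every `r`-coloring of finsets, a subset `B` of size at least
`M` all of whose `k`-element subsets get the same color. -/
def RP (k r M n : ℕ) : Prop :=
  ∀ S : Finset ℕ, n ≤ S.card → ∀ c : Finset ℕ → Fin r,
    ∃ B : Finset ℕ, B ⊆ S ∧ M ≤ B.card ∧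
      ∃ k0 : Fin r, ∀ A : Finset ℕ, A ⊆ B → A.card = k → c A = k0

lemma rp_zero (r M : ℕ) : RP 0 r M M := by
  intro S hS c
  exact ⟨S, Finset.Subset.refl S, hS, c ∅, fun A _ hA => by
    rw [Finset.card_eq_zero.mp hA]⟩

/-- Iterated Ramsey bound. -/
def NN (F : ℕ → ℕ) : ℕ → ℕ
  | 0 => 0
  | j + 1 => F (NN F j) + 1

lemma rp_minhom (k r : ℕ) (F : ℕ → ℕ) (hF : ∀ M, RP k r M (F M)) :
    ∀ (j : ℕ) (c : Finset ℕ → Fin r) (S : Finset ℕ),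
      NN F j ≤ S.card →
      ∃ T : Finset ℕ, T ⊆ S ∧ T.card = j ∧
        ∃ kf : ℕ → Fin r,
          ∀ A : Finset ℕ, A ⊆ T → A.card = k + 1 →
            ∀ hA : A.Nonempty, c A = kf (A.min' hA) := by
  intro j
  induction j with
  | zero =>
    intro c S _
    refine ⟨∅, Finset.empty_subset S, rfl, fun _ => c ∅, ?_⟩
    intro A hA hcard _
    have : A = ∅ := Finset.subset_empty.mp hA
    simp [this] at hcard
  | succ j ih =>
    intro c S hS
    have hrec : NN F (j+1) = F (NN F j) + 1 := rfl
    have hSne : S.Nonempty := by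
      rw [← Finset.card_pos]
      omega
    set v := S.min' hSne with hv
    have hvS : v ∈ S := S.min'_mem hSne
    set S' := S.erase v with hS'
    have hS'card : F (NN F j) ≤ S'.card := by
      have hce := Finset.card_erase_of_mem hvS
      rw [← hS'] at hce
      omega
    obtain ⟨B, hBS', hBcard, k0, hmono⟩ :=
      hF (NN F j) S' hS'card (fun A => c (insert v A))
    obtain ⟨T', hT'B, hT'card, kf', hkf'⟩ := ih c B hBcard
    have hvT' : v ∉ T' := by
      intro hmem
      exact Finset.notMem_erase v S (hBS' (hT'B hmem))
    refine ⟨insert v T', ?_, ?_, fun x => if x = v then k0 else kf' x, ?_⟩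
    · intro a ha
      rcases Finset.mem_insert.mp ha with h | h
      · exact h ▸ hvS
      · exact Finset.mem_of_mem_erase (hBS' (hT'B h))
    · rw [Finset.card_insert_of_notMem hvT', hT'card]
    · intro A hA hcard hAne
      by_cases hvA : v ∈ A
      · have hmin : A.min' hAne = v := by
          apply le_antisymm (Finset.min'_le A v hvA)
          apply Finset.le_min'
          intro y hy
          have hyS : y ∈ S := by
            rcases Finset.mem_insert.mp (hA hy) with h | h
            · exact h ▸ hvS
            · exact Finset.mem_of_mem_erase (hBS' (hT'B h))
          exact S.min'_le y hyS
        show c A = if A.min' hAne = v then k0 else kf' (A.min' hAne)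
        rw [if_pos hmin]
        have hAv : A = insert v (A.erase v) := (Finset.insert_erase hvA).symm
        have hsub : A.erase v ⊆ T' := by
          intro a ha
          have h1 := Finset.mem_of_mem_erase ha
          have h2 := Finset.ne_of_mem_erase ha
          rcases Finset.mem_insert.mp (hA h1) with h | h
          · exact absurd h h2
          · exact h
        have hcard' : (A.erase v).card = k := by
          rw [Finset.card_erase_of_mem hvA, hcard]
          omega
        calc c A = c (insert v (A.erase v)) := by rw [← hAv]
          _ = k0 := hmono (A.erase v) (hsub.trans hT'B) hcard'
      · have hAT' : A ⊆ T' := by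
          intro a ha
          rcases Finset.mem_insert.mp (hA ha) with h | h
          · exact absurd (h ▸ ha) hvA
          · exact h
        have hminT' : A.min' hAne ∈ T' := hAT' (A.min'_mem hAne)
        have : A.min' hAne ≠ v := fun h => hvT' (h ▸ hminT')
        show c A = if A.min' hAne = v then k0 else kf' (A.min' hAne)
        rw [if_neg this]
        exact hkf' A hAT' hcard hAne

/-- Finite Ramsey theorem for `k`-uniform hypergraphs on `ℕ` with `r` colors. -/
lemma ramsey_fin (k r M : ℕ) (hr : 0 < r) : ∃ n, RP k r M n := by
  induction k generalizing M with
  | zero => exact ⟨M, rp_zero r M⟩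
  | succ k ih =>
    choose F hF using ih
    refine ⟨NN F (r * M + 1), ?_⟩
    intro S hS c
    obtain ⟨T, hTS, hTcard, kf, hkf⟩ := rp_minhom k r F hF (r * M + 1) c S hS
    have hmaps : ∀ a ∈ T, kf a ∈ (Finset.univ : Finset (Fin r)) :=
      fun a _ => Finset.mem_univ _
    have hlt : (Finset.univ : Finset (Fin r)).card * (M - 1) < T.card := by
      rw [Finset.card_univ, Fintype.card_fin, hTcard]
      have : r * (M - 1) ≤ r * M := Nat.mul_le_mul_left r (Nat.sub_le M 1)
      omega
    obtain ⟨c0, _, hc0⟩ :=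
      Finset.exists_lt_card_fiber_of_mul_lt_card_of_maps_to hmaps hlt
    refine ⟨T.filter (fun x => kf x = c0), Finset.filter_subset _ _ |>.trans hTS, by omega, c0, ?_⟩
    intro A hA hcard
    have hAne : A.Nonempty := by
      rw [← Finset.card_pos, hcard]; omega
    have hAT : A ⊆ T := hA.trans (Finset.filter_subset _ _)
    rw [hkf A hAT hcard hAne]
    have := hA (A.min'_mem hAne)
    exact (Finset.mem_filter.mp this).2

/-- Cancellation: `a*T + u ≤ b*T + v` with `v < T` forces `a ≤ b`. -/
lemma le_of_mul_add_le (a b T u v : ℕ) (h : a * T + u ≤ b * T + v) (hv : v < T) :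
    a ≤ b := by
  by_contra hab
  push_neg at hab
  have h1 : (b + 1) * T ≤ a * T := Nat.mul_le_mul_right T hab
  have h2 : (b + 1) * T = b * T + T := by ring
  omega

/-- The class of `t`-dimensional grids has the Ramsey property for
comparabilities: for all `s, r > 0` there is `n` such that any `r`-coloring of the
comparable pairs of the grid `(Fin t → Fin n)` (componentwise order) yields a
subposet isomorphic to the grid `s^t` all of whose comparable pairs get one color. -/
theorem stmt_7 (t : ℕ) (ht : 0 < t) (s r : ℕ) (hs : 0 < s) (hr : 0 < r) :
    ∃ n : ℕ, ∀ c : (Fin t → Fin n) → (Fin t → Fin n) → Fin r,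
      ∃ f : (Fin t → Fin s) → (Fin t → Fin n),
        (∀ x y : Fin t → Fin s, x ≤ y ↔ f x ≤ f y) ∧
        ∃ k : Fin r, ∀ x y : Fin t → Fin s, x < y → c (f x) (f y) = k := by
  classical
  -- the "spread" coordinate values
  set s' : ℕ := t * s * s with hs'
  set H : (Fin t → Fin s) → Fin t → ℕ :=
    fun x i => (x i : ℕ) * (t * s) + ∑ j, (x j : ℕ) with hH
  have hsum_lt : ∀ x : Fin t → Fin s, (∑ j, ((x j : ℕ))) < t * s := by
    intro x
    have h1 : (∑ j, ((x j : ℕ))) ≤ ∑ _j : Fin t, (s - 1) := by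
      apply Finset.sum_le_sum
      intro j _
      exact Nat.le_sub_one_of_lt (x j).isLt
    have h2 : (∑ _j : Fin t, (s - 1)) = t * (s - 1) := by
      rw [Finset.sum_const, Finset.card_univ, Fintype.card_fin, smul_eq_mul]
    have h3 : t * (s - 1) + t = t * s := by
      have : s - 1 + 1 = s := Nat.succ_pred_eq_of_pos hs
      calc t * (s - 1) + t = t * (s - 1 + 1) := by ring
        _ = t * s := by rw [this]
    omega
  have hH_lt : ∀ x i, H x i < s' := by
    intro x i
    have h1 : ((x i : ℕ) + 1) * (t * s) ≤ s * (t * s) :=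
      Nat.mul_le_mul_right (t * s) (x i).isLt
    have h2 : (x i : ℕ) * (t * s) + t * s = ((x i : ℕ) + 1) * (t * s) := by ring
    have h3 := hsum_lt x
    have h4 : s * (t * s) = t * s * s := by ring
    simp only [hH, hs']
    omega
  -- strict monotonicity / reflection facts about H
  have hH_mono : ∀ x y : Fin t → Fin s, x ≤ y → ∀ i, H x i ≤ H y i := by
    intro x y hxy i
    apply Nat.add_le_add
    · exact Nat.mul_le_mul_right _ (hxy i)
    · exact Finset.sum_le_sum (fun j _ => hxy j)
  have hH_strict : ∀ x y : Fin t → Fin s, x < y → ∀ i, H x i < H y i := by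
    intro x y hxy i
    obtain ⟨hle, j0, hj0⟩ := Pi.lt_def.mp hxy
    have hsum : (∑ j, ((x j : ℕ))) < ∑ j, ((y j : ℕ)) := by
      apply Finset.sum_lt_sum (fun j _ => by exact_mod_cast hle j)
      exact ⟨j0, Finset.mem_univ j0, by exact_mod_cast hj0⟩
    have := Nat.mul_le_mul_right (t * s) (show (x i : ℕ) ≤ (y i : ℕ) from hle i)
    simp only [hH]
    omega
  have hH_refl : ∀ x y : Fin t → Fin s, ∀ i, H x i ≤ H y i → x i ≤ y i := by
    intro x y i h
    exact le_of_mul_add_le _ _ _ _ _ h (hsum_lt y)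
  -- Ramsey for (2t)-subsets, target size L
  set L : ℕ := s' * t with hL
  obtain ⟨n0, hn0⟩ := ramsey_fin (2 * t) r L hr
  refine ⟨max n0 1, ?_⟩
  set n : ℕ := max n0 1 with hn
  have hnpos : 0 < n := lt_of_lt_of_le Nat.one_pos (le_max_right n0 1)
  intro c
  -- index of a grid point coordinate inside Fin L
  have hidx : ∀ (x : Fin t → Fin s) (i : Fin t), s' * (i : ℕ) + H x i < L := by
    intro x i
    have h1 : s' * ((i : ℕ) + 1) ≤ s' * t := Nat.mul_le_mul_left s' i.isLt
    have h2 := hH_lt x i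
    have h3 : s' * ((i : ℕ) + 1) = s' * (i : ℕ) + s' := by ring
    omega
  set toFinn : ℕ → Fin n := fun a => ⟨a % n, Nat.mod_lt a hnpos⟩ with htoFinn
  -- the coloring of finsets
  set C : Finset ℕ → Fin r := fun A =>
    if h : A.card = 2 * t then
      c (fun i => toFinn (A.orderEmbOfFin h ⟨2 * (i : ℕ), by omega⟩))
        (fun i => toFinn (A.orderEmbOfFin h ⟨2 * (i : ℕ) + 1, by omega⟩))
    else ⟨0, hr⟩ with hC
  obtain ⟨B, hBS, hBcard, k0, hmono⟩ :=
    hn0 (Finset.range n) (by rw [Finset.card_range]; exact le_max_left n0 1) C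
  obtain ⟨B', hB'B, hB'card⟩ := Finset.exists_subset_card_eq hBcard
  set b : Fin L ↪o ℕ := B'.orderEmbOfFin hB'card with hb
  have hbmem : ∀ j, b j ∈ B := fun j => hB'B (B'.orderEmbOfFin_mem hB'card j)
  have hblt : ∀ j, b j < n := fun j => Finset.mem_range.mp (hBS (hbmem j))
  -- the embedding f
  set f : (Fin t → Fin s) → (Fin t → Fin n) :=
    fun x i => toFinn (b ⟨s' * (i : ℕ) + H x i, hidx x i⟩) with hf
  have hfval : ∀ x i, ((f x i : ℕ)) = b ⟨s' * (i : ℕ) + H x i, hidx x i⟩ := by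
    intro x i
    simp only [hf, htoFinn]
    exact Nat.mod_eq_of_lt (hblt _)
  refine ⟨f, ?_, k0, ?_⟩
  · intro x y
    constructor
    · intro hxy i
      show (f x i : ℕ) ≤ (f y i : ℕ)
      rw [hfval, hfval]
      apply b.monotone
      show s' * (i : ℕ) + H x i ≤ s' * (i : ℕ) + H y i
      exact Nat.add_le_add_left (hH_mono x y hxy i) _
    · intro hxy i
      have h1 : (f x i : ℕ) ≤ (f y i : ℕ) := hxy i
      rw [hfval, hfval] at h1
      have h2 := b.le_iff_le.mp h1
      have h3 : s' * (i : ℕ) + H x i ≤ s' * (i : ℕ) + H y i := h2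
      exact hH_refl x y i (by omega)
  · intro x y hxy
    -- the strictly increasing interleaved sequence
    have hidx2 : ∀ j : Fin (2 * t), (j : ℕ) / 2 < t := fun j => by
      have := j.isLt; omega
    set w : Fin (2 * t) → ℕ := fun j =>
      b ⟨s' * ((j : ℕ) / 2) +
          (if (j : ℕ) % 2 = 0 then H x ⟨(j : ℕ) / 2, hidx2 j⟩
           else H y ⟨(j : ℕ) / 2, hidx2 j⟩),
        by split
           · exact hidx x ⟨(j : ℕ) / 2, hidx2 j⟩
           · exact hidx y ⟨(j : ℕ) / 2, hidx2 j⟩⟩ with hw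
    have hwmono : StrictMono w := by
      intro j j' hjj'
      apply b.strictMono
      show (⟨_, _⟩ : Fin L) < ⟨_, _⟩
      rw [Fin.lt_def]
      simp only
      have hj : (j : ℕ) < (j' : ℕ) := hjj'
      rcases Nat.lt_or_ge ((j : ℕ) / 2) ((j' : ℕ) / 2) with hq | hq
      · -- different blocks
        have h1 : s' * ((j : ℕ) / 2 + 1) ≤ s' * ((j' : ℕ) / 2) :=
          Nat.mul_le_mul_left s' hq
        have h2 : s' * ((j : ℕ) / 2 + 1) = s' * ((j : ℕ) / 2) + s' := by ring
        have h3 : (if (j : ℕ) % 2 = 0 then H x ⟨(j : ℕ) / 2, hidx2 j⟩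
            else H y ⟨(j : ℕ) / 2, hidx2 j⟩) < s' := by
          split <;> exact hH_lt _ _
        omega
      · -- same block: j even, j' odd
        have hq' : (j : ℕ) / 2 = (j' : ℕ) / 2 := by omega
        have hpar : (j : ℕ) % 2 = 0 ∧ (j' : ℕ) % 2 = 1 := by omega
        have hfin : (⟨(j : ℕ) / 2, hidx2 j⟩ : Fin t) = ⟨(j' : ℕ) / 2, hidx2 j'⟩ :=
          Fin.ext hq'
        have h1 : (if (j : ℕ) % 2 = 0 then H x ⟨(j : ℕ) / 2, hidx2 j⟩
            else H y ⟨(j : ℕ) / 2, hidx2 j⟩) = H x ⟨(j : ℕ) / 2, hidx2 j⟩ :=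
          if_pos hpar.1
        have h2 : (if (j' : ℕ) % 2 = 0 then H x ⟨(j' : ℕ) / 2, hidx2 j'⟩
            else H y ⟨(j' : ℕ) / 2, hidx2 j'⟩) = H y ⟨(j' : ℕ) / 2, hidx2 j'⟩ :=
          if_neg (by omega)
        have h3 : H x ⟨(j : ℕ) / 2, hidx2 j⟩ < H y ⟨(j' : ℕ) / 2, hidx2 j'⟩ := by
          rw [hfin]
          exact hH_strict x y hxy _
        have h4 : s' * ((j : ℕ) / 2) = s' * ((j' : ℕ) / 2) := by rw [hq']
        rw [h1, h2]
        omega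
    set A : Finset ℕ := Finset.image w Finset.univ with hA
    have hAcard : A.card = 2 * t := by
      rw [hA, Finset.card_image_of_injective _ hwmono.injective, Finset.card_univ,
        Fintype.card_fin]
    have hAB : A ⊆ B := by
      intro a ha
      obtain ⟨j, _, rfl⟩ := Finset.mem_image.mp ha
      exact hbmem _
    have hweq : w = A.orderEmbOfFin hAcard :=
      Finset.orderEmbOfFin_unique hAcard
        (fun j => Finset.mem_image.mpr ⟨j, Finset.mem_univ j, rfl⟩) hwmono
    have hwx : ∀ i : Fin t, w ⟨2 * (i : ℕ), by omega⟩
        = b ⟨s' * (i : ℕ) + H x i, hidx x i⟩ := by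
      intro i
      simp only [hw]
      congr 1
      apply Fin.ext
      simp only
      have hdiv : 2 * (i : ℕ) / 2 = (i : ℕ) := by omega
      have hmod : 2 * (i : ℕ) % 2 = 0 := by omega
      rw [if_pos hmod]
      congr 1
      · rw [hdiv]
      · congr 1
        exact Fin.ext hdiv
    have hwy : ∀ i : Fin t, w ⟨2 * (i : ℕ) + 1, by omega⟩
        = b ⟨s' * (i : ℕ) + H y i, hidx y i⟩ := by
      intro i
      simp only [hw]
      congr 1
      apply Fin.ext
      simp only
      have hdiv : (2 * (i : ℕ) + 1) / 2 = (i : ℕ) := by omega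
      have hmod : ¬ ((2 * (i : ℕ) + 1) % 2 = 0) := by omega
      rw [if_neg hmod]
      congr 1
      · rw [hdiv]
      · congr 1
        exact Fin.ext hdiv
    have hCA := hmono A hAB hAcard
    simp only [hC, dif_pos hAcard] at hCA
    rw [← hCA]
    rw [← hweq]
    congr 1
    · funext i
      apply Fin.ext
      rw [hfval, hwx i]
      simp only [htoFinn]
      exact (Nat.mod_eq_of_lt (hblt _)).symm
    · funext i
      apply Fin.ext
      rw [hfval, hwy i]
      simp only [htoFinn]
      exact (Nat.mod_eq_of_lt (hblt _)).symm
end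

section
/- The class of all finite posets has the Ramsey property for comparabilities: for every finite poset P and every positive integer r, there exists a finite poset Q such that for every r-coloring of the comparable pairs of Q, there is a subposet P' of Q isomorphic to P all of whose comparable pairs receive the same color. Moreover, Q may be taken to be a grid n^t. -/
theorem steps_lemma {r m : ℕ} (hr : 0 < r)
    (hIH : ∀ s : ℕ, ∃ N : ℕ, ∀ A : Finset ℕ, N ≤ A.card → ∀ χ : Finset ℕ → Fin r,
      ∃ M ⊆ A, s ≤ M.card ∧ ∃ k, ∀ S ⊆ M, S.card = m → χ S = k) :
    ∀ L : ℕ, ∃ N : ℕ, ∀ A : Finset ℕ, N ≤ A.card → ∀ χ : Finset ℕ → Fin r,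
      ∃ (v : ℕ → ℕ) (k : ℕ → Fin r),
        (∀ i < L, v i ∈ A) ∧
        (∀ i j, i < j → j < L → v i ≠ v j) ∧
        (∀ i < L, ∀ S : Finset ℕ, S.card = m →
          (∀ a ∈ S, ∃ j, i < j ∧ j < L ∧ a = v j) → χ (insert (v i) S) = k i) := by
  intro L
  induction L with
  | zero =>
    exact ⟨0, fun A _ χ => ⟨fun _ => 0, fun _ => ⟨0, hr⟩, fun i hi => absurd hi (by omega),
      fun i j _ hj => absurd hj (by omega), fun i hi => absurd hi (by omega)⟩⟩
  | succ L ih =>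
    obtain ⟨NL, hNL⟩ := ih
    obtain ⟨NI, hNI⟩ := hIH NL
    refine ⟨NI + 1, fun A hA χ => ?_⟩
    have hAne : A.Nonempty := Finset.card_pos.mp (by omega)
    obtain ⟨v0, hv0⟩ := hAne
    have herase : NI ≤ (A.erase v0).card := by
      rw [Finset.card_erase_of_mem hv0]; omega
    obtain ⟨M, hMA, hMcard, k0, hk0⟩ := hNI (A.erase v0) herase (fun S => χ (insert v0 S))
    obtain ⟨v', k', hv'A, hv'inj, hv'mono⟩ := hNL M hMcard χ
    have hv'M : ∀ i < L, v' i ∈ M := hv'A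
    have hv'ne : ∀ i < L, v' i ≠ v0 := fun i hi =>
      Finset.ne_of_mem_erase (hMA (hv'M i hi))
    refine ⟨fun n => match n with | 0 => v0 | n+1 => v' n,
            fun n => match n with | 0 => k0 | n+1 => k' n, ?_, ?_, ?_⟩
    · intro i hi
      match i with
      | 0 => exact hv0
      | i+1 => exact Finset.mem_of_mem_erase (hMA (hv'M i (by omega)))
    · intro i j hij hj
      match i, j with
      | 0, j+1 => exact fun h => (hv'ne j (by omega)) h.symm
      | i+1, j+1 => exact hv'inj i j (by omega) (by omega)
    · intro i hi S hS hSmem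
      match i with
      | 0 =>
        have hSM : S ⊆ M := by
          intro a ha
          obtain ⟨j, hj1, hj2, rfl⟩ := hSmem a ha
          match j, hj1 with
          | j+1, _ => exact hv'M j (by omega)
        exact hk0 S hSM hS
      | i+1 =>
        refine hv'mono i (by omega) S hS ?_
        intro a ha
        obtain ⟨j, hj1, hj2, rfl⟩ := hSmem a ha
        match j, hj1 with
        | j+1, _ => exact ⟨j, by omega, by omega, rfl⟩

theorem finite_ramsey {r : ℕ} (hr : 0 < r) (m : ℕ) :
    ∀ s : ℕ, ∃ N : ℕ, ∀ A : Finset ℕ, N ≤ A.card → ∀ χ : Finset ℕ → Fin r,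
      ∃ M ⊆ A, s ≤ M.card ∧ ∃ k, ∀ S ⊆ M, S.card = m → χ S = k := by
  induction m with
  | zero =>
    intro s
    refine ⟨s, fun A hA χ => ?_⟩
    obtain ⟨M, hMA, hMcard⟩ := A.exists_subset_card_eq hA
    refine ⟨M, hMA, hMcard.ge, χ ∅, fun S _ hS => ?_⟩
    rw [Finset.card_eq_zero.mp hS]
  | succ m ih =>
    intro s
    obtain ⟨N, hN⟩ := steps_lemma hr ih (r * s)
    refine ⟨N, fun A hA χ => ?_⟩
    obtain ⟨v, k, hvA, hvinj, hvmono⟩ := hN A hA χ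
    -- pigeonhole
    obtain ⟨ksel, -, hksel⟩ := Finset.exists_le_card_fiber_of_mul_le_card_of_maps_to
      (f := k) (s := Finset.range (r * s)) (t := Finset.univ)
      (fun a _ => Finset.mem_univ _) (Finset.univ_nonempty_iff.mpr ⟨⟨0, hr⟩⟩)
      (by rw [Finset.card_univ, Fintype.card_fin, Finset.card_range])
    set J : Finset ℕ := {x ∈ Finset.range (r * s) | k x = ksel} with hJ
    have hJrange : ∀ i ∈ J, i < r * s ∧ k i = ksel := by
      intro i hi
      simp only [hJ, Finset.mem_filter, Finset.mem_range] at hi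
      exact hi
    have hvinjJ : Set.InjOn v J := by
      intro a ha b hb hab
      rcases lt_trichotomy a b with h | h | h
      · exact absurd hab (hvinj a b h (hJrange b hb).1)
      · exact h
      · exact absurd hab.symm (hvinj b a h (hJrange a ha).1)
    refine ⟨J.image v, ?_, ?_, ksel, ?_⟩
    · intro a ha
      obtain ⟨i, hi, rfl⟩ := Finset.mem_image.mp ha
      exact hvA i (hJrange i hi).1
    · rw [Finset.card_image_of_injOn hvinjJ]; exact hksel
    · intro S hSM hScard
      set I : Finset ℕ := {i ∈ J | v i ∈ S} with hI
      have hIJ : I ⊆ J := Finset.filter_subset _ _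
      have hSI : S = I.image v := by
        apply Finset.Subset.antisymm
        · intro a ha
          obtain ⟨i, hi, rfl⟩ := Finset.mem_image.mp (hSM ha)
          exact Finset.mem_image.mpr ⟨i, Finset.mem_filter.mpr ⟨hi, ha⟩, rfl⟩
        · intro a ha
          obtain ⟨i, hi, rfl⟩ := Finset.mem_image.mp ha
          exact (Finset.mem_filter.mp hi).2
      have hIne : I.Nonempty := by
        rw [← Finset.image_nonempty (f := v), ← hSI, ← Finset.card_pos, hScard]; omega
      set i0 := I.min' hIne with hi0
      have hi0I : i0 ∈ I := I.min'_mem hIne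
      have hvi0S : v i0 ∈ S := (Finset.mem_filter.mp hi0I).2
      have key : χ (insert (v i0) (S.erase (v i0))) = k i0 := by
        refine hvmono i0 (hJrange i0 (hIJ hi0I)).1 (S.erase (v i0)) ?_ ?_
        · rw [Finset.card_erase_of_mem hvi0S, hScard]; omega
        · intro a ha
          have haS : a ∈ S := Finset.mem_of_mem_erase ha
          obtain ⟨j, hjI, rfl⟩ := Finset.mem_image.mp (hSI ▸ haS)
          have hji0 : j ≠ i0 := by
            rintro rfl
            exact (Finset.ne_of_mem_erase ha) rfl
          have : i0 ≤ j := I.min'_le j hjI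
          exact ⟨j, by omega, (hJrange j (hIJ hjI)).1, rfl⟩
      rw [Finset.insert_erase hvi0S] at key
      rw [key, (hJrange i0 (hIJ hi0I)).2]

namespace Stmt8Aux

variable {α : Type} [Fintype α] [PartialOrder α]

noncomputable instance : Fintype (LinearExtension α) := ‹Fintype α›

noncomputable def linIdx (x : α) : Fin (Fintype.card α) :=
  (monoEquivOfFin (LinearExtension α) rfl).symm (toLinearExtension x)

noncomputable def ofIdx (j : Fin (Fintype.card α)) : α :=
  (monoEquivOfFin (LinearExtension α) rfl) j

lemma ofIdx_linIdx (x : α) : ofIdx (linIdx x) = x :=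
  (monoEquivOfFin (LinearExtension α) rfl).apply_symm_apply (toLinearExtension x)

lemma linIdx_strict {x y : α} (h : x < y) : (linIdx x : ℕ) < (linIdx y : ℕ) := by
  have hle : toLinearExtension x ≤ toLinearExtension y := toLinearExtension.monotone h.le
  have hne : toLinearExtension x ≠ toLinearExtension y := fun hh => h.ne hh
  have hlt : toLinearExtension x < toLinearExtension y := lt_of_le_of_ne hle hne
  exact (monoEquivOfFin (LinearExtension α) rfl).symm.lt_iff_lt.mpr hlt

open Classical in
noncomputable def ee (x : α) (j : ℕ) : ℕ :=
  (linIdx x : ℕ) + if (∃ hj : j < Fintype.card α, ofIdx ⟨j, hj⟩ ≤ x) then Fintype.card α else 0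

lemma ee_lt (x : α) (j : ℕ) : ee x j < 2 * Fintype.card α := by
  have := (linIdx x).isLt
  unfold ee; split <;> omega

lemma ee_strict {x y : α} (h : x < y) (j : ℕ) : ee x j < ee y j := by
  have hlt := linIdx_strict h
  unfold ee
  by_cases hx : ∃ hj : j < Fintype.card α, ofIdx ⟨j, hj⟩ ≤ x
  · obtain ⟨hj, hle⟩ := hx
    rw [if_pos ⟨hj, hle⟩, if_pos ⟨hj, hle.trans h.le⟩]; omega
  · rw [if_neg hx]
    split <;> omega

lemma ee_mono {x y : α} (h : x ≤ y) (j : ℕ) : ee x j ≤ ee y j := by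
  rcases h.lt_or_eq with h | rfl
  · exact (ee_strict h j).le
  · exact le_rfl

lemma ee_not_le {x y : α} (h : ¬ x ≤ y) : ee y (linIdx x) < ee x (linIdx x) := by
  have h1 := (linIdx y).isLt
  have hxcond : ∃ hj : ((linIdx x : ℕ)) < Fintype.card α, ofIdx ⟨(linIdx x : ℕ), hj⟩ ≤ x :=
    ⟨(linIdx x).isLt, by rw [Fin.eta, ofIdx_linIdx]⟩
  have hycond : ¬ ∃ hj : ((linIdx x : ℕ)) < Fintype.card α, ofIdx ⟨(linIdx x : ℕ), hj⟩ ≤ y := by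
    rintro ⟨hj, hle⟩
    rw [Fin.eta, ofIdx_linIdx] at hle
    exact h hle
  unfold ee
  rw [if_pos hxcond, if_neg hycond]
  omega

def clampF (n : ℕ) (hn : 0 < n) (a : ℕ) : Fin n :=
  if h : a < n then ⟨a, h⟩ else ⟨0, hn⟩

lemma clampF_of_lt {n : ℕ} (hn : 0 < n) {a : ℕ} (h : a < n) : clampF n hn a = ⟨a, h⟩ :=
  dif_pos h

/-- The derived coloring on `2d`-element subsets of `ℕ`. -/
noncomputable def chi (d n r : ℕ) (hr : 0 < r) (hn : 0 < n)
    (c : (Fin d → Fin n) → (Fin d → Fin n) → Fin r) (S : Finset ℕ) : Fin r :=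
  if h : S.card = 2 * d then
    c (fun j => clampF n hn (S.orderEmbOfFin h ⟨2 * (j : ℕ), by have := j.isLt; omega⟩))
      (fun j => clampF n hn (S.orderEmbOfFin h ⟨2 * (j : ℕ) + 1, by have := j.isLt; omega⟩))
  else ⟨0, hr⟩

noncomputable def theta (x y : α) (i : ℕ) : ℕ :=
  2 * Fintype.card α * (i / 2) + (if i % 2 = 0 then ee x (i / 2) else ee y (i / 2))

lemma idx_lt {d j v : ℕ} (hj : j < d) (hv : v < 2 * d) : 2 * d * j + v < 2 * d * d := by
  have h1 : 2 * d * j + v < 2 * d * (j + 1) := by rw [Nat.mul_succ]; omega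
  exact h1.trans_le (Nat.mul_le_mul_left _ hj)

lemma theta_lt (x y : α) {i : ℕ} (hi : i < 2 * Fintype.card α) :
    theta x y i < 2 * Fintype.card α * Fintype.card α := by
  have hj : i / 2 < Fintype.card α := by omega
  unfold theta
  refine idx_lt hj ?_
  split
  · exact ee_lt x _
  · exact ee_lt y _

lemma theta_strict {x y : α} (hxy : x < y) {i i' : ℕ} (hii : i < i')
    (hi' : i' < 2 * Fintype.card α) : theta x y i < theta x y i' := by
  have hdiv : i / 2 ≤ i' / 2 := Nat.div_le_div_right hii.le
  rcases lt_or_eq_of_le hdiv with h | h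
  · have hb : (if i % 2 = 0 then ee x (i / 2) else ee y (i / 2)) < 2 * Fintype.card α := by
      split
      · exact ee_lt x _
      · exact ee_lt y _
    have h1 : theta x y i < 2 * Fintype.card α * (i / 2 + 1) := by
      unfold theta; rw [Nat.mul_succ]; omega
    have h2 : 2 * Fintype.card α * (i / 2 + 1) ≤ 2 * Fintype.card α * (i' / 2) := Nat.mul_le_mul_left _ h
    have h3 : 2 * Fintype.card α * (i' / 2) ≤ theta x y i' := Nat.le_add_right _ _
    omega
  · have hpar : i % 2 = 0 ∧ i' % 2 = 1 := by omega
    unfold theta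
    rw [h, if_pos hpar.1, if_neg (by omega)]
    have := ee_strict hxy (i' / 2)
    omega

lemma theta_even (x y : α) (j : ℕ) :
    theta x y (2 * j) = 2 * Fintype.card α * j + ee x j := by
  have h1 : 2 * j / 2 = j := by omega
  have h2 : 2 * j % 2 = 0 := by omega
  rw [theta, h1, h2, if_pos rfl]

lemma theta_odd (x y : α) (j : ℕ) :
    theta x y (2 * j + 1) = 2 * Fintype.card α * j + ee y j := by
  have h1 : (2 * j + 1) / 2 = j := by omega
  have h2 : (2 * j + 1) % 2 = 1 := by omega
  rw [theta, h1, h2, if_neg (by omega)]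

end Stmt8Aux

open Stmt8Aux

/-- The class of all finite posets has the Ramsey property for
comparabilities; moreover the Ramsey poset can be taken to be a grid `n^t`. -/
theorem stmt_8 (α : Type) [Fintype α] [PartialOrder α] (r : ℕ) (hr : 0 < r) :
    ∃ t n : ℕ, ∀ c : (Fin t → Fin n) → (Fin t → Fin n) → Fin r,
      ∃ f : α → (Fin t → Fin n),
        (∀ x y : α, x ≤ y ↔ f x ≤ f y) ∧
        ∃ k : Fin r, ∀ x y : α, x < y → c (f x) (f y) = k := by
  classical
  obtain ⟨N, hN⟩ := finite_ramsey hr (2 * Fintype.card α)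
    (2 * Fintype.card α * Fintype.card α)
  refine ⟨Fintype.card α, max N 1, fun c => ?_⟩
  have hn : 0 < max N 1 := by omega
  obtain ⟨M, hMA, hMcard, k, hmono⟩ := hN (Finset.range (max N 1))
    (by rw [Finset.card_range]; omega) (chi (Fintype.card α) (max N 1) r hr hn c)
  obtain ⟨T, hTM, hT⟩ := Finset.exists_subset_card_eq hMcard
  have hwmem : ∀ i, T.orderEmbOfFin hT i ∈ T := fun i => Finset.orderEmbOfFin_mem T hT i
  have hwlt : ∀ i, T.orderEmbOfFin hT i < max N 1 := fun i =>
    Finset.mem_range.mp (hMA (hTM (hwmem i)))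
  have hidx : ∀ (x : α) (j : Fin (Fintype.card α)),
      2 * Fintype.card α * (j : ℕ) + ee x (j : ℕ) < 2 * Fintype.card α * Fintype.card α :=
    fun x j => idx_lt j.isLt (ee_lt x _)
  refine ⟨fun x j => ⟨T.orderEmbOfFin hT
    ⟨2 * Fintype.card α * (j : ℕ) + ee x (j : ℕ), hidx x j⟩, hwlt _⟩, ?_, k, ?_⟩
  · -- order embedding property
    intro x y
    have coord : ∀ j : Fin (Fintype.card α),
        (T.orderEmbOfFin hT ⟨2 * Fintype.card α * (j : ℕ) + ee x (j : ℕ), hidx x j⟩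
          ≤ T.orderEmbOfFin hT ⟨2 * Fintype.card α * (j : ℕ) + ee y (j : ℕ), hidx y j⟩)
        ↔ ee x (j : ℕ) ≤ ee y (j : ℕ) := by
      intro j
      rw [OrderEmbedding.le_iff_le, Fin.mk_le_mk]
      omega
    constructor
    · intro hxy j
      simp only [Fin.mk_le_mk]
      exact (coord j).mpr (ee_mono hxy (j : ℕ))
    · intro hf
      by_contra hxy
      have h1 := ee_not_le hxy
      have h2 := hf (linIdx x)
      simp only [Fin.mk_le_mk] at h2
      have h3 := (coord (linIdx x)).mp h2
      omega
  · -- monochromatic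
    intro x y hxy
    set Ψ : Fin (2 * Fintype.card α) → ℕ :=
      fun i => T.orderEmbOfFin hT ⟨theta x y (i : ℕ), theta_lt x y i.isLt⟩ with hΨ
    have hΨmono : StrictMono Ψ := by
      intro i i' hii
      exact (T.orderEmbOfFin hT).strictMono (Fin.mk_lt_mk.mpr (theta_strict hxy hii i'.isLt))
    set S : Finset ℕ := Finset.image Ψ Finset.univ with hS
    have hScard : S.card = 2 * Fintype.card α := by
      rw [hS, Finset.card_image_of_injective _ hΨmono.injective, Finset.card_univ,
        Fintype.card_fin]
    have hSM : S ⊆ M := by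
      intro a ha
      obtain ⟨i, -, rfl⟩ := Finset.mem_image.mp (hS ▸ ha)
      exact hTM (hwmem _)
    have hemb : (OrderEmbedding.ofStrictMono Ψ hΨmono) = S.orderEmbOfFin hScard :=
      Finset.orderEmbOfFin_unique' hScard
        (fun i => hS ▸ Finset.mem_image_of_mem _ (Finset.mem_univ i))
    have heval : ∀ i : Fin (2 * Fintype.card α), S.orderEmbOfFin hScard i = Ψ i :=
      fun i => by rw [← hemb]; rfl
    rw [← hmono S hSM hScard]
    unfold chi
    rw [dif_pos hScard]
    congr 1
    · funext j
      rw [heval ⟨2 * (j : ℕ), by have := j.isLt; omega⟩]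
      have hmk : (⟨theta x y (2 * (j : ℕ)),
            theta_lt x y (by have := j.isLt; omega)⟩ :
            Fin (2 * Fintype.card α * Fintype.card α)) =
          ⟨2 * Fintype.card α * (j : ℕ) + ee x (j : ℕ), hidx x j⟩ :=
        Fin.ext (theta_even x y (j : ℕ))
      simp only [hΨ]
      rw [hmk, clampF_of_lt hn (hwlt _)]
    · funext j
      rw [heval ⟨2 * (j : ℕ) + 1, by have := j.isLt; omega⟩]
      have hmk : (⟨theta x y (2 * (j : ℕ) + 1),
            theta_lt x y (by have := j.isLt; omega)⟩ :
            Fin (2 * Fintype.card α * Fintype.card α)) =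
          ⟨2 * Fintype.card α * (j : ℕ) + ee y (j : ℕ), hidx y j⟩ :=
        Fin.ext (theta_odd x y (j : ℕ))
      simp only [hΨ]
      rw [hmk, clampF_of_lt hn (hwlt _)]
end

section
/- For every positive integer d, the class of finite posets of order dimension at most d has the Ramsey property for comparabilities: for every finite poset P with dim(P) ≤ d and every r, there exists a finite poset Q with dim(Q) ≤ d such that every r-coloring of the comparable pairs of Q yields a subposet isomorphic to P all of whose comparable pairs have the same color. -/
open Finset

lemma strictMono_cons {m : ℕ} (x : ℕ) (a : Fin m → ℕ) (ha : StrictMono a)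
    (hx : ∀ j, x < a j) : StrictMono (Fin.cons x a : Fin (m+1) → ℕ) := by
  intro i j hij
  rcases Fin.eq_zero_or_eq_succ i with rfl | ⟨i', rfl⟩ <;>
    rcases Fin.eq_zero_or_eq_succ j with rfl | ⟨j', rfl⟩
  · exact absurd hij (lt_irrefl _)
  · simpa using hx j'
  · simp at hij
  · simpa using ha (Fin.succ_lt_succ_iff.mp hij)

lemma seq_lemma (γ : Type) [Fintype γ] [Nonempty γ] (c : ℕ → ℕ → γ) :
    ∀ (m : ℕ) (S : Finset ℕ),
      (Fintype.card γ + 1) ^ m ≤ S.card →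
      ∃ a : Fin m → ℕ, StrictMono a ∧ (∀ i, a i ∈ S) ∧
        ∃ col : Fin m → γ, ∀ i j : Fin m, i < j → c (a i) (a j) = col i := by
  classical
  intro m
  induction m with
  | zero =>
    intro S _
    exact ⟨Fin.elim0, fun i j h => i.elim0, fun i => i.elim0, Fin.elim0, fun i => i.elim0⟩
  | succ m ih =>
    intro S hS
    have hcγ : 1 ≤ Fintype.card γ := Fintype.card_pos
    have hpow1 : 1 ≤ (Fintype.card γ + 1) ^ m := Nat.one_le_pow _ _ (by omega)
    have hexp : (Fintype.card γ + 1) ^ (m+1)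
        = Fintype.card γ * (Fintype.card γ + 1) ^ m + (Fintype.card γ + 1) ^ m := by ring
    have hpos : 0 < S.card := by omega
    have hSne : S.Nonempty := Finset.card_pos.mp hpos
    set x := S.min' hSne with hx
    set S' := S.erase x with hS'
    have hec : S'.card = S.card - 1 := Finset.card_erase_of_mem (S.min'_mem hSne)
    have hcard' : Fintype.card γ * (Fintype.card γ + 1) ^ m ≤ S'.card := by omega
    obtain ⟨t, -, ht⟩ := Finset.exists_le_card_fiber_of_mul_le_card_of_maps_to
      (f := fun y => c x y) (s := S') (t := (univ : Finset γ))
      (fun a _ => mem_univ _) univ_nonempty (by simpa using hcard')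
    set T : Finset ℕ := {y ∈ S' | c x y = t} with hT
    obtain ⟨a', ha'mono, ha'mem, col', hcol'⟩ := ih T (le_trans (by omega) ht)
    have ha'S' : ∀ j, a' j ∈ S' := fun j => (mem_filter.mp (ha'mem j)).1
    have hxlt : ∀ j, x < a' j := by
      intro j
      have hne : a' j ≠ x := Finset.ne_of_mem_erase (ha'S' j)
      have : x ≤ a' j := S.min'_le _ (Finset.mem_of_mem_erase (ha'S' j))
      omega
    refine ⟨Fin.cons x a', strictMono_cons x a' ha'mono hxlt, ?_, Fin.cons t col', ?_⟩
    · intro i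
      rcases Fin.eq_zero_or_eq_succ i with rfl | ⟨i', rfl⟩
      · simpa using S.min'_mem hSne
      · simpa using Finset.mem_of_mem_erase (ha'S' i')
    · intro i j hij
      rcases Fin.eq_zero_or_eq_succ i with rfl | ⟨i', rfl⟩ <;>
        rcases Fin.eq_zero_or_eq_succ j with rfl | ⟨j', rfl⟩
      · exact absurd hij (lt_irrefl _)
      · simpa using (mem_filter.mp (ha'mem j')).2
      · simp at hij
      · simpa using hcol' i' j' (Fin.succ_lt_succ_iff.mp hij)

lemma finRamsey (γ : Type) [Fintype γ] [Nonempty γ] (k : ℕ) :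
    ∃ n : ℕ, ∀ c : ℕ → ℕ → γ,
      ∃ s : Fin k → ℕ, StrictMono s ∧ (∀ i, s i < n) ∧
        ∃ u : γ, ∀ i j : Fin k, i < j → c (s i) (s j) = u := by
  classical
  set m := Fintype.card γ * k with hm
  refine ⟨(Fintype.card γ + 1) ^ m, fun c => ?_⟩
  obtain ⟨a, hamono, hamem, col, hcol⟩ :=
    seq_lemma γ c m (Finset.range ((Fintype.card γ + 1) ^ m)) (by simp)
  obtain ⟨u, -, hu⟩ := Finset.exists_le_card_fiber_of_mul_le_card_of_maps_to
    (n := k) (f := col) (s := (univ : Finset (Fin m))) (t := (univ : Finset γ))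
    (fun a _ => mem_univ _) univ_nonempty (by simp [hm])
  set F : Finset (Fin m) := {i ∈ univ | col i = u} with hF
  obtain ⟨G, hGF, hGcard⟩ := Finset.exists_subset_card_eq hu
  set e := G.orderIsoOfFin hGcard with he
  refine ⟨fun j => a (e j), ?_, ?_, u, ?_⟩
  · intro i j hij
    exact hamono (by exact_mod_cast e.strictMono hij)
  · intro i
    exact Finset.mem_range.mp (hamem _)
  · intro i j hij
    have hlt : (e i : Fin m) < (e j : Fin m) := by exact_mod_cast e.strictMono hij
    rw [hcol _ _ hlt]
    have : (e i : Fin m) ∈ F := hGF (e i).2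
    simpa [hF] using this

lemma productRamsey (d : ℕ) (γ : Type) [Fintype γ] [Nonempty γ] (k : ℕ) :
    ∃ n : ℕ, 0 < n ∧ ∀ c : (Fin d → ℕ) → (Fin d → ℕ) → γ,
      ∃ b : Fin d → Fin k → ℕ, (∀ i, StrictMono (b i)) ∧ (∀ i j, b i j < n) ∧
        ∃ t : γ, ∀ x y : Fin d → Fin k, (∀ i, x i < y i) →
          c (fun i => b i (x i)) (fun i => b i (y i)) = t := by
  classical
  induction d with
  | zero =>
    refine ⟨1, one_pos, fun c => ⟨Fin.elim0, fun i => i.elim0, fun i => i.elim0,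
      c Fin.elim0 Fin.elim0, fun x y _ => ?_⟩⟩
    have h1 : (fun i : Fin 0 => (Fin.elim0 : Fin 0 → Fin k → ℕ) i (x i)) = Fin.elim0 :=
      funext fun i => i.elim0
    have h2 : (fun i : Fin 0 => (Fin.elim0 : Fin 0 → Fin k → ℕ) i (y i)) = Fin.elim0 :=
      funext fun i => i.elim0
    rw [h1, h2]
  | succ d ih =>
    obtain ⟨n₀, hn₀pos, hIH⟩ := ih
    set δ := (Fin d → Fin n₀) → (Fin d → Fin n₀) → γ with hδ
    haveI : Nonempty δ := ⟨fun _ _ => Classical.arbitrary γ⟩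
    obtain ⟨n₁, hFR⟩ := finRamsey δ k
    refine ⟨max n₀ n₁, lt_of_lt_of_le hn₀pos (le_max_left _ _), fun c => ?_⟩
    set e : ℕ → ℕ → δ := fun a b => fun p q =>
      c (Fin.snoc (fun i => (p i : ℕ)) a) (Fin.snoc (fun i => (q i : ℕ)) b) with he
    obtain ⟨s, hsmono, hsbd, u, hu⟩ := hFR e
    set clamp : ℕ → Fin n₀ := fun v => if h : v < n₀ then ⟨v, h⟩ else ⟨0, hn₀pos⟩ with hclamp
    set c'' : (Fin d → ℕ) → (Fin d → ℕ) → γ := fun p q =>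
      u (fun i => clamp (p i)) (fun i => clamp (q i)) with hc''
    obtain ⟨b', hb'mono, hb'bd, t, ht⟩ := hIH c''
    refine ⟨Fin.snoc b' s, ?_, ?_, t, ?_⟩
    · intro i
      refine Fin.lastCases ?_ (fun i' => ?_) i
      · simpa using hsmono
      · simpa using hb'mono i'
    · intro i j
      refine Fin.lastCases ?_ (fun i' => ?_) i
      · simpa using lt_of_lt_of_le (hsbd j) (le_max_right _ _)
      · simpa using lt_of_lt_of_le (hb'bd i' j) (le_max_left _ _)
    · intro x y hxy
      set x' : Fin d → Fin k := fun i => x i.castSucc with hx'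
      set y' : Fin d → Fin k := fun i => y i.castSucc with hy'
      set p : Fin d → Fin n₀ := fun i => ⟨b' i (x' i), hb'bd i _⟩ with hp
      set q : Fin d → Fin n₀ := fun i => ⟨b' i (y' i), hb'bd i _⟩ with hq
      have key1 : (fun i => (Fin.snoc b' s : Fin (d+1) → Fin k → ℕ) i (x i))
          = Fin.snoc (fun i => (p i : ℕ)) (s (x (Fin.last d))) := by
        funext i
        refine Fin.lastCases ?_ (fun i' => ?_) i <;> simp [hp, hx']
      have key2 : (fun i => (Fin.snoc b' s : Fin (d+1) → Fin k → ℕ) i (y i))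
          = Fin.snoc (fun i => (q i : ℕ)) (s (y (Fin.last d))) := by
        funext i
        refine Fin.lastCases ?_ (fun i' => ?_) i <;> simp [hq, hy']
      rw [key1, key2]
      have step1 : c (Fin.snoc (fun i => (p i : ℕ)) (s (x (Fin.last d))))
          (Fin.snoc (fun i => (q i : ℕ)) (s (y (Fin.last d))))
          = e (s (x (Fin.last d))) (s (y (Fin.last d))) p q := rfl
      rw [step1, hu _ _ (hxy (Fin.last d))]
      have step2 : u p q = c'' (fun i => (b' i (x' i) : ℕ)) (fun i => (b' i (y' i) : ℕ)) := by
        simp only [hc'']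
        congr 1 <;> funext i <;> simp [hclamp, hp, hq, hb'bd]
      rw [step2]
      exact ht x' y' (fun i => hxy i.castSucc)

lemma rank_lemma (α : Type) [Fintype α] (L : α → α → Prop) (hL : IsLinearOrder α L) :
    ∃ ρ : α → ℕ, (∀ x, ρ x ≤ Fintype.card α) ∧ (∀ x y, L x y ↔ ρ x ≤ ρ y) ∧
      (∀ x y, L x y → x ≠ y → ρ x < ρ y) := by
  classical
  haveI := hL
  set ρ : α → ℕ := fun x => ({y ∈ (Finset.univ : Finset α) | L y x}).card with hρ
  have hsub : ∀ x y, L x y → {z ∈ (Finset.univ : Finset α) | L z x} ⊆ {z ∈ (Finset.univ : Finset α) | L z y} := by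
    intro x y hxy z hz
    simp only [Finset.mem_filter, Finset.mem_univ, true_and] at hz ⊢
    exact _root_.trans_of L hz hxy
  have hmain : ∀ x y, ¬ L x y → ρ y < ρ x := by
    intro x y hnxy
    have hyx : L y x := (total_of L x y).resolve_left hnxy
    have hne : x ≠ y := fun h => hnxy (h ▸ refl_of L x)
    refine Finset.card_lt_card ((Finset.ssubset_iff_of_subset (hsub y x hyx)).mpr
      ⟨x, ?_, ?_⟩)
    · simp [refl_of L x]
    · simp only [Finset.mem_filter, Finset.mem_univ, true_and]
      exact hnxy
  refine ⟨ρ, ?_, ?_, ?_⟩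
  · intro x
    exact Finset.card_le_univ _
  · intro x y
    constructor
    · intro h; exact Finset.card_le_card (hsub x y h)
    · intro h
      by_contra hn
      exact absurd h (not_le.mpr (hmain x y hn))
  · intro x y hxy hne
    have : ¬ L y x := fun h => hne (antisymm_of L hxy h)
    exact hmain y x this

/-- A poset has a realizer of size `d`: `d` linear extensions whose intersection is
the partial order.  (Order dimension at most `d`.) -/
def HasRealizer (d : ℕ) (α : Type) [PartialOrder α] : Prop :=
  ∃ L : Fin d → α → α → Prop,
    (∀ i, IsLinearOrder α (L i)) ∧
    (∀ i, ∀ x y : α, x ≤ y → L i x y) ∧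
    (∀ x y : α, (∀ i, L i x y) ↔ x ≤ y)

lemma grid_realizer (d n : ℕ) : HasRealizer d (Fin d → Fin n) := by
  classical
  obtain ⟨T, hT, hTle⟩ := extend_partialOrder ((· ≤ ·) : (Fin d → Fin n) → _ → Prop)
  haveI := hT
  set L : Fin d → (Fin d → Fin n) → (Fin d → Fin n) → Prop := fun i f g =>
    f = g ∨ f i < g i ∨ (f i = g i ∧ f ≠ g ∧ T f g) with hLdef
  have hLle : ∀ i f g, L i f g → f i ≤ g i := by
    rintro i f g (rfl | h | ⟨h, -, -⟩)
    · exact le_refl _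
    · exact le_of_lt h
    · exact le_of_eq h
  refine ⟨L, ?_, ?_, ?_⟩
  · intro i
    refine { refl := fun f => Or.inl rfl, trans := ?_, antisymm := ?_, total := ?_ }
    · rintro f g h (rfl | hfg | ⟨e1, ne1, t1⟩) hgh
      · exact hgh
      · rcases hgh with rfl | hgh | ⟨e2, ne2, t2⟩
        · exact Or.inr (Or.inl hfg)
        · exact Or.inr (Or.inl (lt_trans hfg hgh))
        · exact Or.inr (Or.inl (lt_of_lt_of_le hfg (le_of_eq e2)))
      · rcases hgh with rfl | hgh | ⟨e2, ne2, t2⟩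
        · exact Or.inr (Or.inr ⟨e1, ne1, t1⟩)
        · exact Or.inr (Or.inl (lt_of_le_of_lt (le_of_eq e1) hgh))
        · by_cases hfh : f = h
          · exact Or.inl hfh
          · exact Or.inr (Or.inr ⟨e1.trans e2, hfh, _root_.trans_of T t1 t2⟩)
    · rintro f g (rfl | h1 | ⟨e1, ne1, t1⟩) h2
      · rfl
      · rcases h2 with rfl | h2 | ⟨e2, ne2, t2⟩
        · rfl
        · exact absurd (lt_trans h1 h2) (lt_irrefl _)
        · exact absurd e2 (ne_of_gt h1)
      · rcases h2 with rfl | h2 | ⟨e2, ne2, t2⟩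
        · rfl
        · exact absurd e1 (ne_of_gt h2)
        · exact antisymm_of T t1 t2
    · intro f g
      by_cases hfg : f = g
      · exact Or.inl (Or.inl hfg)
      · rcases lt_trichotomy (f i) (g i) with h | h | h
        · exact Or.inl (Or.inr (Or.inl h))
        · rcases total_of T f g with ht' | ht'
          · exact Or.inl (Or.inr (Or.inr ⟨h, hfg, ht'⟩))
          · exact Or.inr (Or.inr (Or.inr ⟨h.symm, Ne.symm hfg, ht'⟩))
        · exact Or.inr (Or.inr (Or.inl h))
  · intro i f g hfg
    by_cases h : f = g
    · exact Or.inl h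
    · rcases lt_or_eq_of_le (hfg i) with h' | h'
      · exact Or.inr (Or.inl h')
      · exact Or.inr (Or.inr ⟨h', h, hTle _ _ hfg⟩)
  · intro f g
    constructor
    · intro h i
      rcases h i with rfl | h' | ⟨h', -, -⟩
      · exact le_refl _
      · exact le_of_lt h'
      · exact le_of_eq h'
    · intro h i
      by_cases hfg : f = g
      · exact Or.inl hfg
      · rcases lt_or_eq_of_le (h i) with h' | h'
        · exact Or.inr (Or.inl h')
        · exact Or.inr (Or.inr ⟨h', hfg, hTle _ _ h⟩)

/-- For every `d > 0`, the class of finite posets of order dimension at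
most `d` has the Ramsey property for comparabilities. -/
theorem stmt_10 (d : ℕ) (hd : 0 < d)
    (α : Type) [Fintype α] [PartialOrder α] (hα : HasRealizer d α)
    (r : ℕ) (hr : 0 < r) :
    ∃ (β : Type) (_ : Fintype β) (pβ : PartialOrder β),
      @HasRealizer d β pβ ∧
      ∀ c : β → β → Fin r,
        ∃ f : α → β,
          (∀ x y : α, x ≤ y ↔ pβ.le (f x) (f y)) ∧
          ∃ k : Fin r, ∀ x y : α, x < y → c (f x) (f y) = k := by
  classical
  obtain ⟨Lα, hLin, hExt, hInt⟩ := hα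
  set K := Fintype.card α + 1 with hK
  have hrank : ∀ i : Fin d, ∃ ρ : α → ℕ, (∀ x, ρ x ≤ Fintype.card α) ∧
      (∀ x y, Lα i x y ↔ ρ x ≤ ρ y) ∧ (∀ x y, Lα i x y → x ≠ y → ρ x < ρ y) :=
    fun i => rank_lemma α (Lα i) (hLin i)
  choose ρ hbd hiff hstrict using hrank
  haveI : Nonempty (Fin r) := ⟨⟨0, hr⟩⟩
  obtain ⟨n₀, hn₀pos, hPR⟩ := productRamsey d (Fin r) K
  refine ⟨Fin d → Fin n₀, inferInstance, inferInstance, grid_realizer d n₀, ?_⟩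
  intro c
  set clamp : ℕ → Fin n₀ := fun v => if h : v < n₀ then ⟨v, h⟩ else ⟨0, hn₀pos⟩ with hclamp
  set cN : (Fin d → ℕ) → (Fin d → ℕ) → Fin r := fun p q =>
    c (fun i => clamp (p i)) (fun i => clamp (q i)) with hcN
  obtain ⟨b, hbmono, hbbd, t, ht⟩ := hPR cN
  set rk : Fin d → α → Fin K := fun i a => ⟨ρ i a, Nat.lt_succ_of_le (hbd i a)⟩ with hrk
  set f : α → (Fin d → Fin n₀) := fun a i => ⟨b i (rk i a), hbbd i _⟩ with hf
  refine ⟨f, ?_, t, ?_⟩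
  · intro x y
    rw [← hInt]
    constructor
    · intro h i
      have h1 : ρ i x ≤ ρ i y := (hiff i x y).mp (h i)
      have h2 : rk i x ≤ rk i y := h1
      have h3 : b i (rk i x) ≤ b i (rk i y) := (hbmono i).le_iff_le.mpr h2
      exact h3
    · intro h i
      have h3 : f x i ≤ f y i := h i
      have h2 : b i (rk i x) ≤ b i (rk i y) := h3
      have h1 : rk i x ≤ rk i y := (hbmono i).le_iff_le.mp h2
      exact (hiff i x y).mpr h1
  · intro x y hxy
    have hne : x ≠ y := ne_of_lt hxy
    have hle : x ≤ y := le_of_lt hxy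
    have hlt : ∀ i, rk i x < rk i y := by
      intro i
      exact hstrict i x y (hExt i x y hle) hne
    have := ht (fun i => rk i x) (fun i => rk i y) hlt
    have hrw1 : (fun i => clamp (b i (rk i x))) = f x := by
      funext i
      simp [hclamp, hf, hbbd]
    have hrw2 : (fun i => clamp (b i (rk i y))) = f y := by
      funext i
      simp [hclamp, hf, hbbd]
    rw [hcN] at this
    simpa [hrw1, hrw2] using this
end

section
/- Let s ≥ 1, l = s², P = s×s the 2-dimensional grid and Q = l×l. If f, g : P → Q are two casual embeddings, then f(P) = g(P) as subsets of Q, and the composition g⁻¹ ∘ f is an automorphism of P. -/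
namespace CasualAux

lemma lex_lt {s a b c d : ℕ} (hb : b < s) (hd : d < s) :
    a * s + b < c * s + d ↔ a < c ∨ (a = c ∧ b < d) := by
  constructor
  · intro h
    rcases lt_trichotomy a c with h1 | h1 | h1
    · exact Or.inl h1
    · subst h1; exact Or.inr ⟨rfl, by omega⟩
    · have h2 : (c + 1) * s ≤ a * s := Nat.mul_le_mul_right s h1
      rw [Nat.succ_mul] at h2
      omega
  · rintro (h1 | ⟨rfl, h1⟩)
    · have h2 : (a + 1) * s ≤ c * s := Nat.mul_le_mul_right s h1
      rw [Nat.succ_mul] at h2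
      omega
    · omega

def lexFin (s : ℕ) (x : Fin s × Fin s) : Fin (s * s) :=
  ⟨x.1.val * s + x.2.val, by
    have h1 : (x.1.val + 1) * s ≤ s * s := Nat.mul_le_mul_right s x.1.isLt
    rw [Nat.succ_mul] at h1
    have := x.2.isLt
    omega⟩

lemma lexFin_lt {s : ℕ} {x y : Fin s × Fin s} :
    lexFin s x < lexFin s y ↔ x.1 < y.1 ∨ (x.1 = y.1 ∧ x.2 < y.2) := by
  show x.1.val * s + x.2.val < y.1.val * s + y.2.val ↔ _
  rw [lex_lt x.2.isLt y.2.isLt]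
  simp only [Fin.lt_def, Fin.ext_iff]

lemma lexFin_inj {s : ℕ} : Function.Injective (lexFin s) := by
  intro x y h
  have h1 : ¬ lexFin s x < lexFin s y := by rw [h]; exact lt_irrefl _
  have h2 : ¬ lexFin s y < lexFin s x := by rw [h]; exact lt_irrefl _
  rw [lexFin_lt] at h1 h2
  rcases lt_trichotomy x.1 y.1 with hc | hc | hc
  · exact absurd (Or.inl hc) h1
  · rcases lt_trichotomy x.2 y.2 with hd | hd | hd
    · exact absurd (Or.inr ⟨hc, hd⟩) h1
    · exact Prod.ext hc hd
    · exact absurd (Or.inr ⟨hc.symm, hd⟩) h2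
  · exact absurd (Or.inl hc) h2

lemma lexFin_bij {s : ℕ} : Function.Bijective (lexFin s) :=
  (Fintype.bijective_iff_injective_and_card _).2 ⟨lexFin_inj, by simp⟩


def pt {s : ℕ} (a b : ℕ) (ha : a < s := by omega) (hb : b < s := by omega) :
    Fin s × Fin s := (⟨a, ha⟩, ⟨b, hb⟩)

lemma pt_le {s : ℕ} {a b c d : ℕ} {ha hb hc hd} (h1 : a ≤ c) (h2 : b ≤ d) :
    (pt a b ha hb : Fin s × Fin s) ≤ pt c d hc hd := ⟨h1, h2⟩

lemma pt_fst_lt {s : ℕ} {a b c d : ℕ} {ha hb hc hd} (h : a < c) :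
    ((pt a b ha hb : Fin s × Fin s)).1 < (pt c d hc hd).1 := h

lemma pt_snd_lt {s : ℕ} {a b c d : ℕ} {ha hb hc hd} (h : b < d) :
    ((pt a b ha hb : Fin s × Fin s)).2 < (pt c d hc hd).2 := h

lemma swap_pt {s : ℕ} {a b : ℕ} {ha hb} :
    Prod.swap (pt a b ha hb : Fin s × Fin s) = pt b a hb ha := rfl

lemma pt_ne {s : ℕ} {a b c d : ℕ} {ha hb hc hd} (h : a ≠ c ∨ b ≠ d) :
    (pt a b ha hb : Fin s × Fin s) ≠ pt c d hc hd := by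
  intro he
  have h1 : a = c := congrArg (fun z : Fin s × Fin s => z.1.val) he
  have h2 : b = d := congrArg (fun z : Fin s × Fin s => z.2.val) he
  rcases h with h | h
  exacts [h h1, h h2]

section Engine

variable {s : ℕ} {L M : Fin s × Fin s → Fin (s * s)}

lemma inc_not_le {x y : Fin s × Fin s} (h1 : x.1 < y.1) (h2 : y.2 < x.2) :
    ¬ x ≤ y ∧ ¬ y ≤ x :=
  ⟨fun h => absurd h.2 (not_le.2 h2), fun h => absurd h.1 (not_le.2 h1)⟩

lemma hrev (hiff : ∀ x y : Fin s × Fin s, x ≤ y ↔ L x ≤ L y ∧ M x ≤ M y)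
    {x y : Fin s × Fin s} (h1 : x.1 < y.1) (h2 : y.2 < x.2) :
    L x < L y ↔ M y < M x := by
  obtain ⟨hn1, hn2⟩ := inc_not_le h1 h2
  have a1 : ¬ (L x ≤ L y ∧ M x ≤ M y) := fun h => hn1 ((hiff x y).2 h)
  have a2 : ¬ (L y ≤ L x ∧ M y ≤ M x) := fun h => hn2 ((hiff y x).2 h)
  constructor
  · intro h; by_contra hc
    exact a1 ⟨h.le, not_lt.mp hc⟩
  · intro h; by_contra hc
    exact a2 ⟨not_lt.mp hc, h.le⟩

lemma hrev' (hiff : ∀ x y : Fin s × Fin s, x ≤ y ↔ L x ≤ L y ∧ M x ≤ M y)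
    {x y : Fin s × Fin s} (h1 : x.1 < y.1) (h2 : y.2 < x.2) :
    L y < L x ↔ M x < M y := by
  obtain ⟨hn1, hn2⟩ := inc_not_le h1 h2
  have a1 : ¬ (L x ≤ L y ∧ M x ≤ M y) := fun h => hn1 ((hiff x y).2 h)
  have a2 : ¬ (L y ≤ L x ∧ M y ≤ M x) := fun h => hn2 ((hiff y x).2 h)
  constructor
  · intro h; by_contra hc
    exact a2 ⟨h.le, not_lt.mp hc⟩
  · intro h; by_contra hc
    exact a1 ⟨not_lt.mp hc, h.le⟩

lemma Lmono (hiff : ∀ x y : Fin s × Fin s, x ≤ y ↔ L x ≤ L y ∧ M x ≤ M y)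
    {x y : Fin s × Fin s} (h : x ≤ y) : L x ≤ L y := ((hiff x y).1 h).1

lemma Mmono (hiff : ∀ x y : Fin s × Fin s, x ≤ y ↔ L x ≤ L y ∧ M x ≤ M y)
    {x y : Fin s × Fin s} (h : x ≤ y) : M x ≤ M y := ((hiff x y).1 h).2

lemma L_flip (hL : Function.Injective L) {p q : Fin s × Fin s} (hne : p ≠ q) :
    ¬ L p < L q ↔ L q < L p := by
  constructor
  · intro h
    exact lt_of_le_of_ne (not_lt.mp h) (fun e => hne ((hL e).symm))
  · exact fun h => not_lt.mpr h.le

lemma vadj (hiff : ∀ x y : Fin s × Fin s, x ≤ y ↔ L x ≤ L y ∧ M x ≤ M y)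
    (hL : Function.Injective L)
    (i k : ℕ) (hi : i + 1 < s) (hk : k + 2 < s) :
    L (pt i (k+1)) < L (pt (i+1) k) ↔ L (pt i (k+2)) < L (pt (i+1) (k+1)) := by
  constructor
  · intro h1
    by_contra h2
    rw [L_flip hL (pt_ne (by omega))] at h2
    rcases lt_or_ge (L (pt i (k+2) (by omega) (by omega))) (L (pt (i+1) k (by omega) (by omega))) with hc | hc
    · have h3 : L (pt (i+1) k (by omega) (by omega)) ≤ L (pt (i+1) (k+1)) :=
        Lmono hiff (pt_le le_rfl (by omega))
      exact absurd (h2.trans (hc.trans_le h3)) (lt_irrefl _)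
    · have hc' : L (pt (i+1) k (by omega) (by omega)) < L (pt i (k+2)) :=
        lt_of_le_of_ne hc (fun e => absurd (hL e) (pt_ne (by omega)))
      have m2 : M (pt i (k+2) (by omega) (by omega)) < M (pt (i+1) k) :=
        (hrev' hiff (pt_fst_lt (by omega)) (pt_snd_lt (by omega))).mp hc'
      have m1 : M (pt (i+1) k (by omega) (by omega)) < M (pt i (k+1)) :=
        (hrev hiff (pt_fst_lt (by omega)) (pt_snd_lt (by omega))).mp h1
      have m3 : M (pt i (k+1) (by omega) (by omega)) ≤ M (pt i (k+2)) :=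
        Mmono hiff (pt_le le_rfl (by omega))
      exact absurd ((m2.trans m1).trans_le m3) (lt_irrefl _)
  · intro h2
    by_contra h1
    rw [L_flip hL (pt_ne (by omega))] at h1
    rcases lt_or_ge (L (pt i (k+2) (by omega) (by omega))) (L (pt (i+1) k (by omega) (by omega))) with hc | hc
    · have h3 : L (pt i (k+1) (by omega) (by omega)) ≤ L (pt i (k+2)) :=
        Lmono hiff (pt_le le_rfl (by omega))
      exact absurd ((h3.trans_lt hc).trans h1) (lt_irrefl _)
    · have hc' : L (pt (i+1) k (by omega) (by omega)) < L (pt i (k+2)) :=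
        lt_of_le_of_ne hc (fun e => absurd (hL e) (pt_ne (by omega)))
      have m1 : M (pt (i+1) (k+1) (by omega) (by omega)) < M (pt i (k+2)) :=
        (hrev hiff (pt_fst_lt (by omega)) (pt_snd_lt (by omega))).mp h2
      have m2 : M (pt i (k+2) (by omega) (by omega)) < M (pt (i+1) k) :=
        (hrev' hiff (pt_fst_lt (by omega)) (pt_snd_lt (by omega))).mp hc'
      have m3 : M (pt (i+1) k (by omega) (by omega)) ≤ M (pt (i+1) (k+1)) :=
        Mmono hiff (pt_le le_rfl (by omega))
      exact absurd ((m1.trans m2).trans_le m3) (lt_irrefl _)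

lemma prop_up (hiff : ∀ x y : Fin s × Fin s, x ≤ y ↔ L x ≤ L y ∧ M x ≤ M y)
    (hL : Function.Injective L)
    (hA : ∀ i k (_ : i + 1 < s) (_ : k + 1 < s), L (pt i (k+1)) < L (pt (i+1) k)) :
    ∀ (j i i' j' : ℕ) (hi : i < s) (hj : j < s) (hi' : i' < s) (hj' : j' < s),
      i < i' → j' < j → L (pt i j) < L (pt i' j') := by
  intro j
  induction j using Nat.strong_induction_on with
  | _ j ih =>
    intro i i' j' hi hj hi' hj' h1 h2
    rcases eq_or_lt_of_le (show i + 1 ≤ i' from h1) with he | hlt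
    · -- i' = i + 1 : use M chain
      subst he
      have hAx : L (pt i (j'+1) (by omega) (by omega)) < L (pt (i+1) j') :=
        hA i j' (by omega) (by omega)
      have m1 : M (pt (i+1) j' (by omega) (by omega)) < M (pt i (j'+1)) :=
        (hrev hiff (pt_fst_lt (by omega)) (pt_snd_lt (by omega))).mp hAx
      have m2 : M (pt i (j'+1) (by omega) (by omega)) ≤ M (pt i j) :=
        Mmono hiff (pt_le le_rfl (by omega))
      exact (hrev hiff (pt_fst_lt (by omega)) (pt_snd_lt (by omega))).mpr (m1.trans_le m2)
    · obtain ⟨m, rfl⟩ : ∃ m, j = m + 1 := ⟨j - 1, by omega⟩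
      have hAx : L (pt i (m+1) (by omega) (by omega)) < L (pt (i+1) m) :=
        hA i m (by omega) (by omega)
      rcases eq_or_lt_of_le (show j' ≤ m from by omega) with he2 | hlt2
      · subst he2
        have h3 : L (pt (i+1) j' (by omega) (by omega)) ≤ L (pt i' j') :=
          Lmono hiff (pt_le (by omega) le_rfl)
        exact hAx.trans_le h3
      · have h3 : L (pt (i+1) m (by omega) (by omega)) < L (pt i' j') :=
          ih m (by omega) (i+1) i' j' (by omega) (by omega) (by omega) (by omega) hlt hlt2
        exact hAx.trans h3

lemma L_eq_lexFin (hiff : ∀ x y : Fin s × Fin s, x ≤ y ↔ L x ≤ L y ∧ M x ≤ M y)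
    (hL : Function.Injective L)
    (hup : ∀ x y : Fin s × Fin s, x.1 < y.1 → y.2 < x.2 → L x < L y) :
    L = lexFin s := by
  have key : ∀ x y, lexFin s x < lexFin s y → L x < L y := by
    intro x y h
    rw [lexFin_lt] at h
    rcases h with h | ⟨h, h2⟩
    · rcases lt_or_ge y.2 x.2 with h2 | h2
      · exact hup x y h h2
      · have hne : x ≠ y := by rintro rfl; exact lt_irrefl _ h
        exact lt_of_le_of_ne (Lmono hiff ⟨h.le, h2⟩) (fun he => hne (hL he))
    · have hne : x ≠ y := by rintro rfl; exact lt_irrefl _ h2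
      exact lt_of_le_of_ne (Lmono hiff ⟨h.le, h2.le⟩) (fun he => hne (hL he))
  have hbijF : Function.Bijective (lexFin s) := lexFin_bij
  have hbijL : Function.Bijective L :=
    (Fintype.bijective_iff_injective_and_card _).2 ⟨hL, by simp⟩
  set e := Equiv.ofBijective _ hbijF with he
  have hsm : StrictMono (L ∘ e.symm) := by
    intro a b hab
    refine key _ _ ?_
    have ha : lexFin s (e.symm a) = a := e.apply_symm_apply a
    have hb : lexFin s (e.symm b) = b := e.apply_symm_apply b
    rw [ha, hb]; exact hab
  have hu : L ∘ e.symm = id := by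
    have hid : StrictMono (id : Fin (s * s) → Fin (s * s)) := strictMono_id
    have inst : WellFoundedLT (Fin (s * s)) := inferInstance
    refine (@StrictMono.range_inj (Fin (s * s)) (Fin (s * s)) _ _ inst _ _ hsm hid).1 ?_
    rw [Set.range_id]
    exact (hbijL.surjective.comp e.symm.surjective).range_eq
  funext x
  have h1 := congrFun hu (e x)
  simp only [Function.comp_apply, Equiv.symm_apply_apply, id_eq] at h1
  rw [h1]; rfl

end Engine


theorem casual_det {s : ℕ} (L M : Fin s × Fin s → Fin (s * s))
    (hiff : ∀ x y : Fin s × Fin s, x ≤ y ↔ L x ≤ L y ∧ M x ≤ M y)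
    (hL : Function.Injective L) (hM : Function.Injective M) :
    (L = lexFin s ∧ M = fun x => lexFin s x.swap) ∨
    ((L = fun x => lexFin s x.swap) ∧ M = lexFin s) := by
  have hiffML : ∀ x y : Fin s × Fin s, x ≤ y ↔ M x ≤ M y ∧ L x ≤ L y :=
    fun x y => (hiff x y).trans and_comm
  have hiffS : ∀ x y : Fin s × Fin s,
      x ≤ y ↔ (L ∘ Prod.swap) x ≤ (L ∘ Prod.swap) y ∧ (M ∘ Prod.swap) x ≤ (M ∘ Prod.swap) y :=
    fun x y => (Prod.swap_le_swap (x := x) (y := y)).symm.trans (hiff x.swap y.swap)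
  have hiffSML : ∀ x y : Fin s × Fin s,
      x ≤ y ↔ (M ∘ Prod.swap) x ≤ (M ∘ Prod.swap) y ∧ (L ∘ Prod.swap) x ≤ (L ∘ Prod.swap) y :=
    fun x y => (hiffS x y).trans and_comm
  have hLS : Function.Injective (L ∘ Prod.swap) := hL.comp Prod.swap_injective
  have hMS : Function.Injective (M ∘ Prod.swap) := hM.comp Prod.swap_injective
  by_cases hA : ∀ i k (_ : i + 1 < s) (_ : k + 1 < s), L (pt i (k+1)) < L (pt (i+1) k)
  · -- "up": L is the lex extension
    have hup : ∀ x y : Fin s × Fin s, x.1 < y.1 → y.2 < x.2 → L x < L y := by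
      intro x y h1 h2
      have h3 := prop_up hiff hL hA x.2.val x.1.val y.1.val y.2.val
        x.1.isLt x.2.isLt y.1.isLt y.2.isLt h1 h2
      simpa [pt] using h3
    left
    refine ⟨L_eq_lexFin hiff hL hup, ?_⟩
    have hupMS : ∀ x y : Fin s × Fin s, x.1 < y.1 → y.2 < x.2 →
        (M ∘ Prod.swap) x < (M ∘ Prod.swap) y := by
      intro x y h1 h2
      have h3 : L y.swap < L x.swap := hup y.swap x.swap h2 h1
      exact (hrev (x := y.swap) (y := x.swap) hiff h2 h1).mp h3
    have hMSeq := L_eq_lexFin (L := M ∘ Prod.swap) (M := L ∘ Prod.swap) hiffSML hMS hupMS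
    funext x
    have h4 := congrFun hMSeq x.swap
    simpa using h4
  · -- "down": L is the colex extension
    push_neg at hA
    obtain ⟨i0, k0, hi0, hk0, hn0⟩ := hA
    have col : ∀ k i (hi : i + 1 < s) (hk : k + 1 < s),
        (L (pt i (k+1)) < L (pt (i+1) k) ↔
          L (pt i 1 (by omega) (by omega)) < L (pt (i+1) 0)) := by
      intro k
      induction k with
      | zero => intro i hi hk; exact Iff.rfl
      | succ k ihk =>
        intro i hi hk
        exact ((vadj hiff hL i k hi (by omega)).symm).trans (ihk i hi (by omega))
    have row : ∀ i (hi : i + 1 < s),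
        (L (pt i 1 (by omega) (by omega)) < L (pt (i+1) 0) ↔
          L (pt 0 1 (by omega) (by omega)) < L (pt 1 0 (by omega) (by omega))) := by
      intro i
      induction i with
      | zero => intro hi; exact Iff.rfl
      | succ i ihi =>
        intro hi
        have hsw := vadj (L := L ∘ Prod.swap) (M := M ∘ Prod.swap) hiffS hLS 0 i
          (by omega) (by omega)
        simp only [Function.comp_apply, swap_pt] at hsw
        rw [← L_flip hL (pt_ne (Or.inl (by omega))), ← hsw,
          L_flip hL (pt_ne (Or.inl (by omega)))]
        exact ihi (by omega)
    have hconst : ∀ i k (hi : i + 1 < s) (hk : k + 1 < s),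
        (L (pt i (k+1)) < L (pt (i+1) k) ↔
          L (pt i0 (k0+1) (by omega) (by omega)) < L (pt (i0+1) k0)) := by
      intro i k hi hk
      exact ((col k i hi hk).trans (row i hi)).trans
        (((col k0 i0 hi0 hk0).trans (row i0 hi0)).symm)
    have hdown : ∀ i k (hi : i + 1 < s) (hk : k + 1 < s),
        L (pt (i+1) k) < L (pt i (k+1)) := by
      intro i k hi hk
      have hno : ¬ L (pt i (k+1) (by omega) (by omega)) < L (pt (i+1) k (by omega) (by omega)) :=
        fun h => absurd ((hconst i k hi hk).mp h) (not_lt.mpr hn0)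
      exact (L_flip hL (pt_ne (Or.inl (by omega)))).mp hno
    have hAS : ∀ a b (_ : a + 1 < s) (_ : b + 1 < s),
        (L ∘ Prod.swap) (pt a (b+1)) < (L ∘ Prod.swap) (pt (a+1) b) := by
      intro a b ha hb
      have h3 := hdown b a hb ha
      simpa [swap_pt] using h3
    have hdownAll : ∀ x y : Fin s × Fin s, x.1 < y.1 → y.2 < x.2 → L y < L x := by
      intro x y h1 h2
      have h3 := prop_up (L := L ∘ Prod.swap) (M := M ∘ Prod.swap) hiffS hLS hAS
        y.1.val y.2.val x.2.val x.1.val y.2.isLt y.1.isLt x.2.isLt x.1.isLt h2 h1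
      simpa [pt, Prod.swap] using h3
    right
    constructor
    · have hupLS : ∀ x y : Fin s × Fin s, x.1 < y.1 → y.2 < x.2 →
          (L ∘ Prod.swap) x < (L ∘ Prod.swap) y := by
        intro x y h1 h2
        exact hdownAll y.swap x.swap h2 h1
      have hLSeq := L_eq_lexFin (L := L ∘ Prod.swap) (M := M ∘ Prod.swap) hiffS hLS hupLS
      funext x
      have h4 := congrFun hLSeq x.swap
      simpa using h4
    · have hupM : ∀ x y : Fin s × Fin s, x.1 < y.1 → y.2 < x.2 → M x < M y := by
        intro x y h1 h2
        exact (hrev' hiff h1 h2).mp (hdownAll x y h1 h2)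
      exact L_eq_lexFin (L := M) (M := L) hiffML hM hupM

theorem casual_char {s : ℕ} (f : Fin s × Fin s → Fin (s * s) × Fin (s * s))
    (hf : (∀ x y : Fin s × Fin s, x ≤ y ↔ f x ≤ f y) ∧
      Function.Bijective (fun x : Fin s × Fin s => (f x).1) ∧
      Function.Bijective (fun x : Fin s × Fin s => (f x).2)) :
    (∀ x, f x = (lexFin s x, lexFin s x.swap)) ∨
    (∀ x, f x = (lexFin s x.swap, lexFin s x)) := by
  obtain ⟨hord, hbL, hbM⟩ := hf
  have hiff : ∀ x y : Fin s × Fin s,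
      x ≤ y ↔ (fun x => (f x).1) x ≤ (fun x => (f x).1) y ∧
        (fun x => (f x).2) x ≤ (fun x => (f x).2) y := by
    intro x y
    rw [hord x y, Prod.le_def]
  rcases casual_det (fun x => (f x).1) (fun x => (f x).2) hiff hbL.injective hbM.injective with
    ⟨h1, h2⟩ | ⟨h1, h2⟩
  · exact Or.inl fun x => Prod.ext (congrFun h1 x) (congrFun h2 x)
  · exact Or.inr fun x => Prod.ext (congrFun h1 x) (congrFun h2 x)

end CasualAux

/-- An order embedding of the grid `Fin s × Fin s` into the grid `Fin l × Fin l` is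
casual if each of its two coordinate maps is a bijection onto `Fin l`. -/
def IsCasualEmbedding {s l : ℕ} (f : Fin s × Fin s → Fin l × Fin l) : Prop :=
  (∀ x y : Fin s × Fin s, x ≤ y ↔ f x ≤ f y) ∧
  Function.Bijective (fun x : Fin s × Fin s => (f x).1) ∧
  Function.Bijective (fun x : Fin s × Fin s => (f x).2)


/-- For `s ≥ 1` and `l = s²`, any two casual embeddings
`f, g : s×s → l×l` have the same image, and `g⁻¹ ∘ f` is an automorphism of `s×s`. -/
theorem stmt_11 (s : ℕ) (hs : 1 ≤ s)
    (f g : Fin s × Fin s → Fin (s * s) × Fin (s * s))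
    (hf : IsCasualEmbedding f) (hg : IsCasualEmbedding g) :
    Set.range f = Set.range g ∧
      ∃ e : (Fin s × Fin s) ≃o (Fin s × Fin s), ∀ x, f x = g (e x) := by
  have main : ∃ e : (Fin s × Fin s) ≃o (Fin s × Fin s), ∀ x, f x = g (e x) := by
    rcases CasualAux.casual_char f hf with h1 | h1 <;>
      rcases CasualAux.casual_char g hg with h2 | h2
    · exact ⟨OrderIso.refl _, fun x => (h1 x).trans (h2 x).symm⟩
    · refine ⟨OrderIso.prodComm, fun x => ?_⟩
      have h3 := h2 (Prod.swap x)
      rw [Prod.swap_swap] at h3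
      rw [h1 x, show ((OrderIso.prodComm : (Fin s × Fin s) ≃o (Fin s × Fin s)) x)
        = Prod.swap x from rfl, h3]
    · refine ⟨OrderIso.prodComm, fun x => ?_⟩
      have h3 := h2 (Prod.swap x)
      rw [Prod.swap_swap] at h3
      rw [h1 x, show ((OrderIso.prodComm : (Fin s × Fin s) ≃o (Fin s × Fin s)) x)
        = Prod.swap x from rfl, h3]
    · exact ⟨OrderIso.refl _, fun x => (h1 x).trans (h2 x).symm⟩
  obtain ⟨e, he⟩ := main
  refine ⟨?_, e, he⟩
  have hfe : f = g ∘ e := funext he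
  rw [hfe, Set.range_comp, e.surjective.range_eq, Set.image_univ]
end

section
/- Let s ≥ 1 and l = s². The maps f, g : s×s → l×l defined by f((i,j)) = (s·i + j, s·j + i) and g((i,j)) = (s·j + i, s·i + j) are both casual order embeddings of the grid s×s into the grid l×l, and f(s×s) = g(s×s). -/
lemma aux_le {s i j i' j' : ℕ} (hj : j < s) (hj' : j' < s)
    (h : s * i + j ≤ s * i' + j') : i ≤ i' := by
  by_contra hc
  push_neg at hc
  have : s * (i' + 1) ≤ s * i := Nat.mul_le_mul_left s hc
  rw [Nat.mul_add, Nat.mul_one] at this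
  omega

lemma aux_inj {s i j i' j' : ℕ} (hj : j < s) (hj' : j' < s)
    (h : s * i + j = s * i' + j') : i = i' ∧ j = j' := by
  have h1 : i ≤ i' := aux_le hj hj' h.le
  have h2 : i' ≤ i := aux_le hj' hj h.ge
  have : i = i' := le_antisymm h1 h2
  subst this
  omega

lemma aux_bij (s : ℕ) :
    Function.Bijective (fun p : Fin s × Fin s =>
      (⟨s * p.1.val + p.2.val, by have := p.1.isLt; have := p.2.isLt; nlinarith⟩ :
        Fin (s * s))) := by
  constructor
  · rintro ⟨i, j⟩ ⟨i', j'⟩ h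
    simp only [Fin.mk.injEq] at h
    obtain ⟨h1, h2⟩ := aux_inj j.isLt j'.isLt h
    simp [Prod.ext_iff, Fin.ext_iff, h1, h2]
  · rintro ⟨k, hk⟩
    have hs : 0 < s := by
      rcases Nat.eq_zero_or_pos s with h | h
      · subst h; exact absurd hk (by simp)
      · exact h
    refine ⟨(⟨k / s, ?_⟩, ⟨k % s, Nat.mod_lt _ hs⟩), ?_⟩
    · exact Nat.div_lt_of_lt_mul hk
    · simp [Fin.ext_iff, Nat.div_add_mod]

/-- For `s ≥ 1` and `l = s²`, the maps `f(i,j) = (s·i+j, s·j+i)` and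
`g(i,j) = (s·j+i, s·i+j)` are casual order embeddings of `s×s` into `l×l` with the
same image. -/
theorem stmt_12 (s : ℕ) (hs : 1 ≤ s)
    (f g : Fin s × Fin s → Fin (s * s) × Fin (s * s))
    (hfdef : ∀ p : Fin s × Fin s,
      f p = (⟨s * p.1.val + p.2.val, by
              have h1 := p.1.isLt; have h2 := p.2.isLt; nlinarith⟩,
             ⟨s * p.2.val + p.1.val, by
              have h1 := p.1.isLt; have h2 := p.2.isLt; nlinarith⟩))
    (hgdef : ∀ p : Fin s × Fin s,
      g p = (⟨s * p.2.val + p.1.val, by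
              have h1 := p.1.isLt; have h2 := p.2.isLt; nlinarith⟩,
             ⟨s * p.1.val + p.2.val, by
              have h1 := p.1.isLt; have h2 := p.2.isLt; nlinarith⟩)) :
    IsCasualEmbedding f ∧ IsCasualEmbedding g ∧ Set.range f = Set.range g := by
  have hgf : ∀ p : Fin s × Fin s, g p = f p.swap := by
    intro p
    rw [hgdef p, hfdef p.swap]
    rfl
  have hord : ∀ x y : Fin s × Fin s, x ≤ y ↔ f x ≤ f y := by
    rintro ⟨i, j⟩ ⟨i', j'⟩
    rw [hfdef, hfdef]
    simp only [Prod.mk_le_mk, Fin.mk_le_mk, Fin.le_def]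
    constructor
    · rintro ⟨h1, h2⟩
      constructor <;> nlinarith [Nat.mul_le_mul_left s h1, Nat.mul_le_mul_left s h2]
    · rintro ⟨h1, h2⟩
      exact ⟨aux_le j.isLt j'.isLt h1, aux_le i.isLt i'.isLt h2⟩
  have hb1 : Function.Bijective (fun x : Fin s × Fin s => (f x).1) := by
    have : (fun x : Fin s × Fin s => (f x).1) =
        (fun p : Fin s × Fin s =>
          (⟨s * p.1.val + p.2.val, by have := p.1.isLt; have := p.2.isLt; nlinarith⟩ :
            Fin (s * s))) := by
      funext p; rw [hfdef p]
    rw [this]; exact aux_bij s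
  have hb2 : Function.Bijective (fun x : Fin s × Fin s => (f x).2) := by
    have : (fun x : Fin s × Fin s => (f x).2) =
        (fun p : Fin s × Fin s =>
          (⟨s * p.2.val + p.1.val, by have := p.1.isLt; have := p.2.isLt; nlinarith⟩ :
            Fin (s * s))) := by
      funext p; rw [hfdef p]
    rw [this]
    have := (aux_bij s).comp (Prod.swap_bijective (α := Fin s) (β := Fin s))
    convert this using 1
    rfl
  have hf : IsCasualEmbedding f := ⟨hord, hb1, hb2⟩
  have hswap : Function.Bijective (Prod.swap : Fin s × Fin s → Fin s × Fin s) :=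
    Prod.swap_bijective
  have hg : IsCasualEmbedding g := by
    refine ⟨?_, ?_, ?_⟩
    · intro x y
      rw [hgf x, hgf y, ← hord]
      constructor
      · rintro ⟨h1, h2⟩; exact ⟨h2, h1⟩
      · rintro ⟨h1, h2⟩; exact ⟨h2, h1⟩
    · have : (fun x : Fin s × Fin s => (g x).1) =
          (fun x : Fin s × Fin s => (f x).1) ∘ Prod.swap := by
        funext p; simp [hgf p]
      rw [this]; exact hb1.comp hswap
    · have : (fun x : Fin s × Fin s => (g x).2) =
          (fun x : Fin s × Fin s => (f x).2) ∘ Prod.swap := by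
        funext p; simp [hgf p]
      rw [this]; exact hb2.comp hswap
  refine ⟨hf, hg, ?_⟩
  have : g = f ∘ Prod.swap := funext hgf
  rw [this, Set.range_comp, Set.range_eq_univ.mpr hswap.surjective, Set.image_univ]
end

section
/- For all positive integers r, m, and l, there exists n such that for every r-coloring of the set of subposets of the grid n×n that are isomorphic to m×m, there is a subposet P of n×n isomorphic to l×l such that every subposet of P isomorphic to m×m receives the same color. -/
open Finset

def enum (X : Finset ℕ) (k : ℕ) : ℕ := (X.sort (· ≤ ·)).getD k 0

lemma enum_mem {X : Finset ℕ} {k : ℕ} (hk : k < X.card) : enum X k ∈ X := by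
  have hl : k < (X.sort (· ≤ ·)).length := by rwa [Finset.length_sort]
  have : enum X k = (X.sort (· ≤ ·)).get ⟨k, hl⟩ := by
    simp [enum, List.getD_eq_getElem?_getD, List.getElem?_eq_getElem hl]
  rw [this]
  rw [List.get_eq_getElem]; exact (Finset.mem_sort _).1 (List.getElem_mem _)

lemma enum_lt_enum {X : Finset ℕ} {k j : ℕ} (h : k < j) (hj : j < X.card) :
    enum X k < enum X j := by
  have hlj : j < (X.sort (· ≤ ·)).length := by rwa [Finset.length_sort]
  have hlk : k < (X.sort (· ≤ ·)).length := lt_trans h hlj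
  have h1 : enum X k = (X.sort (· ≤ ·)).get ⟨k, hlk⟩ := by
    simp [enum, List.getD_eq_getElem?_getD, List.getElem?_eq_getElem hlk]
  have h2 : enum X j = (X.sort (· ≤ ·)).get ⟨j, hlj⟩ := by
    simp [enum, List.getD_eq_getElem?_getD, List.getElem?_eq_getElem hlj]
  rw [h1, h2]
  exact X.sortedLT_sort.strictMono_get (show (⟨k, hlk⟩ : Fin _) < ⟨j, hlj⟩ from h)

/-- a strictly increasing `f` on `[0,N)` enumerates its image -/
lemma enum_image {f : ℕ → ℕ} {N : ℕ}
    (hf : ∀ a b, a < b → b < N → f a < f b) :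
    ∀ k < N, enum ((Finset.range N).image f) k = f k := by
  set X := (Finset.range N).image f with hX
  have hperm : List.Perm ((List.range N).map f) (X.sort (· ≤ ·)) := by
    have hnd : ((List.range N).map f).Nodup := by
      refine List.Nodup.map_on ?_ List.nodup_range
      intro a ha b hb hab
      simp only [List.mem_range] at ha hb
      rcases lt_trichotomy a b with h | h | h
      · exact absurd hab (Nat.ne_of_lt (hf a b h hb))
      · exact h
      · exact absurd hab.symm (Nat.ne_of_lt (hf b a h ha))
    refine (List.perm_ext_iff_of_nodup hnd (X.sort_nodup _)).2 ?_
    intro a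
    simp [Finset.mem_sort, hX, List.mem_map, List.mem_range, Finset.mem_image]
  have hsorted : ((List.range N).map f).Pairwise (· ≤ ·) := by
    have hp : List.Pairwise (fun a b => a ∈ List.range N ∧ b ∈ List.range N ∧ a < b)
        (List.range N) := List.Pairwise.and_mem.1 List.pairwise_lt_range
    refine List.Pairwise.map f ?_ hp
    intro a b ⟨_, hb, hab⟩
    exact le_of_lt (hf a b hab (List.mem_range.1 hb))
  have := List.Perm.eq_of_pairwise' (r := (· ≤ ·)) hsorted (X.pairwise_sort _) hperm
  intro k hk
  rw [enum, ← this]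
  rw [List.getD_eq_getElem?_getD]
  have : k < ((List.range N).map f).length := by simpa using hk
  rw [List.getElem?_eq_getElem this]
  simp


lemma sort_union {A B : Finset ℕ} (h : ∀ a ∈ A, ∀ b ∈ B, a < b) :
    (A ∪ B).sort (· ≤ ·) = A.sort (· ≤ ·) ++ B.sort (· ≤ ·) := by
  have hdisj : Disjoint A B := by
    rw [Finset.disjoint_left]
    intro a ha hb
    exact absurd rfl (Nat.ne_of_lt (h a ha a hb))
  refine (fun hp hs => List.Perm.eq_of_pairwise' (r := (· ≤ ·)) ((A ∪ B).pairwise_sort _) hs hp) ?_ ?_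
  · refine (List.perm_ext_iff_of_nodup ((A ∪ B).sort_nodup _) ?_).2 ?_
    · refine List.Nodup.append (A.sort_nodup _) (B.sort_nodup _) ?_
      intro a ha hb
      rw [Finset.mem_sort] at ha hb
      exact absurd rfl (Nat.ne_of_lt (h a ha a hb))
    · intro a
      simp [Finset.mem_sort, Finset.mem_union]
  · rw [List.pairwise_append]
    refine ⟨A.pairwise_sort _, B.pairwise_sort _, ?_⟩
    intro a ha b hb
    rw [Finset.mem_sort] at ha hb
    exact le_of_lt (h a ha b hb)

lemma enum_union_left {A B : Finset ℕ} (h : ∀ a ∈ A, ∀ b ∈ B, a < b)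
    {k : ℕ} (hk : k < A.card) : enum (A ∪ B) k = enum A k := by
  rw [enum, enum, sort_union h, List.getD_append]
  rwa [Finset.length_sort]

lemma enum_union_right {A B : Finset ℕ} (h : ∀ a ∈ A, ∀ b ∈ B, a < b)
    (k : ℕ) : enum (A ∪ B) (A.card + k) = enum B k := by
  rw [enum, enum, sort_union h, List.getD_append_right, Finset.length_sort,
    Nat.add_sub_cancel_left]
  rw [Finset.length_sort]; omega


lemma chainLt {f : ℕ → ℕ} {N : ℕ} (h : ∀ k, k + 1 < N → f k < f (k + 1)) :
    ∀ a b, a < b → b < N → f a < f b := by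
  intro a b hab hbN
  induction b with
  | zero => omega
  | succ b ih =>
    rcases Nat.lt_or_ge a b with h' | h'
    · exact lt_trans (ih h' (by omega)) (h b hbN)
    · have : a = b := by omega
      subst this; exact h a hbN

/-- bundled hypothesis: `(p, q)` is an exact realizer of the grid `m × m` -/
def Hyp (m : ℕ) (p q : ℕ → ℕ → ℕ) : Prop :=
  (∀ i j i' j', i < m → j < m → i' < m → j' < m →
      ((i ≤ i' ∧ j ≤ j') ↔ (p i j ≤ p i' j' ∧ q i j ≤ q i' j'))) ∧
  (∀ i j i' j', i < m → j < m → i' < m → j' < m → p i j = p i' j' → i = i' ∧ j = j') ∧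
  (∀ i j i' j', i < m → j < m → i' < m → j' < m → q i j = q i' j' → i = i' ∧ j = j')

lemma Hyp.swap {m p q} (h : Hyp m p q) : Hyp m q p :=
  ⟨fun i j i' j' hi hj hi' hj' => (h.1 i j i' j' hi hj hi' hj').trans and_comm,
   h.2.2, h.2.1⟩

lemma Hyp.transpose {m p q} (h : Hyp m p q) :
    Hyp m (fun i j => p j i) (fun i j => q j i) :=
  ⟨fun i j i' j' hi hj hi' hj' => and_comm.trans (h.1 j i j' i' hj hi hj' hi'),
   fun i j i' j' hi hj hi' hj' he => and_comm.1 (h.2.1 j i j' i' hj hi hj' hi' he),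
   fun i j i' j' hi hj hi' hj' he => and_comm.1 (h.2.2 j i j' i' hj hi hj' hi' he)⟩

section Core

variable {m : ℕ} {p q : ℕ → ℕ → ℕ}

/-- incomparable pairs get opposite orientations in the two coordinates -/
lemma coreFlip (h : Hyp m p q)
    {i j i' j' : ℕ} (hii : i < i') (hjj : j' < j)
    (hi : i < m) (hj : j < m) (hi' : i' < m) (hj' : j' < m) :
    p i j < p i' j' ↔ q i' j' < q i j := by
  have h1 : ¬ (p i j ≤ p i' j' ∧ q i j ≤ q i' j') := by
    intro hc
    have := (h.1 i j i' j' hi hj hi' hj').2 hc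
    omega
  have h2 : ¬ (p i' j' ≤ p i j ∧ q i' j' ≤ q i j) := by
    intro hc
    have := (h.1 i' j' i j hi' hj' hi hj).2 hc
    omega
  constructor
  · intro hlt
    by_contra h'
    exact h1 ⟨le_of_lt hlt, by omega⟩
  · intro hlt
    by_contra h'
    exact h2 ⟨by omega, le_of_lt hlt⟩

lemma coreMono (h : Hyp m p q)
    {i j i' j' : ℕ} (hii : i ≤ i') (hjj : j ≤ j')
    (hi : i < m) (hj : j < m) (hi' : i' < m) (hj' : j' < m) :
    p i j ≤ p i' j' ∧ q i j ≤ q i' j' :=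
  (h.1 i j i' j' hi hj hi' hj').1 ⟨hii, hjj⟩

/-- adjacent "bits" agree -/
lemma coreChain (h : Hyp m p q) {i : ℕ} (him : i + 2 < m) :
    (p i (m - 1) < p (i + 1) 0) ↔ (p (i + 1) (m - 1) < p (i + 2) 0) := by
  constructor
  · intro hA
    by_contra hA'
    have hne : p (i + 1) (m - 1) ≠ p (i + 2) 0 := fun he => by
      have := h.2.1 _ _ _ _ (by omega) (by omega) (by omega) (by omega) he; omega
    have h1 : p (i + 2) 0 < p (i + 1) (m - 1) := by omega
    have h2 : q (i + 1) (m - 1) < q (i + 2) 0 := by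
      have hflip := coreFlip h (show i + 1 < i + 2 by omega) (show 0 < m - 1 by omega)
        (by omega) (by omega) (by omega) (by omega)
      have hneq : q (i + 1) (m - 1) ≠ q (i + 2) 0 := fun he => by
        have := h.2.2 _ _ _ _ (by omega) (by omega) (by omega) (by omega) he; omega
      have : ¬ q (i + 2) 0 < q (i + 1) (m - 1) := fun hc => by
        have := hflip.2 hc; omega
      omega
    have hple : p i (m - 1) ≤ p (i + 2) 0 := by
      have := (coreMono h (show i + 1 ≤ i + 2 by omega) (le_refl 0)
        (by omega) (by omega) (by omega) (by omega)).1
      omega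
    have hqle : q i (m - 1) ≤ q (i + 2) 0 := by
      have := (coreMono h (show i ≤ i + 1 by omega) (le_refl (m - 1))
        (by omega) (by omega) (by omega) (by omega)).2
      omega
    have := (h.1 i (m - 1) (i + 2) 0 (by omega) (by omega) (by omega) (by omega)).2
      ⟨hple, hqle⟩
    omega
  · intro hA
    by_contra hA'
    have hne : p i (m - 1) ≠ p (i + 1) 0 := fun he => by
      have := h.2.1 _ _ _ _ (by omega) (by omega) (by omega) (by omega) he; omega
    have h2 : q i (m - 1) < q (i + 1) 0 := by
      have hflip := coreFlip h (show i < i + 1 by omega) (show 0 < m - 1 by omega)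
        (by omega) (by omega) (by omega) (by omega)
      have hneq : q i (m - 1) ≠ q (i + 1) 0 := fun he => by
        have := h.2.2 _ _ _ _ (by omega) (by omega) (by omega) (by omega) he; omega
      have : ¬ q (i + 1) 0 < q i (m - 1) := fun hc => by
        have := hflip.2 hc; omega
      omega
    have hqle : q i (m - 1) ≤ q (i + 2) 0 := by
      have := (coreMono h (show i + 1 ≤ i + 2 by omega) (le_refl 0)
        (by omega) (by omega) (by omega) (by omega)).2
      omega
    have hple : p i (m - 1) ≤ p (i + 2) 0 := by
      have := (coreMono h (show i ≤ i + 1 by omega) (le_refl (m - 1))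
        (by omega) (by omega) (by omega) (by omega)).1
      omega
    have := (h.1 i (m - 1) (i + 2) 0 (by omega) (by omega) (by omega) (by omega)).2
      ⟨hple, hqle⟩
    omega

lemma coreAllEq (h : Hyp m p q) {i : ℕ} (him : i + 1 < m) :
    (p i (m - 1) < p (i + 1) 0) ↔ (p 0 (m - 1) < p 1 0) := by
  induction i with
  | zero => rfl
  | succ i ih =>
    have := coreChain h (i := i) (by omega)
    rw [← this]
    exact ih (by omega)

lemma divmod {m : ℕ} (hm : 0 < m) (i j : ℕ) (hj : j < m) :
    (m * i + j) / m = i ∧ (m * i + j) % m = j := by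
  constructor
  · rw [Nat.mul_add_div hm, Nat.div_eq_of_lt hj]
    omega
  · rw [Nat.mul_add_mod, Nat.mod_eq_of_lt hj]

lemma coreLex (h : Hyp m p q) (hm : 0 < m)
    (hbits : ∀ i, i + 1 < m → p i (m - 1) < p (i + 1) 0) :
    ∀ i j, i < m → j < m →
      p i j = enum ((Finset.range m ×ˢ Finset.range m).image fun z => p z.1 z.2)
        (m * i + j) := by
  set P : ℕ → ℕ := fun k => p (k / m) (k % m) with hP
  have hstep : ∀ k, k + 1 < m * m → P k < P (k + 1) := by
    intro k hk
    set i := k / m with hi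
    set j := k % m with hj
    have hjm : j < m := Nat.mod_lt _ hm
    have him : i < m := by
      rw [hi, Nat.div_lt_iff_lt_mul hm]; omega
    have hdm := Nat.div_add_mod k m
    have hkij : k = m * i + j := by
      rw [hi, hj]; omega
    have hmm : m * (i + 1) = m * i + m := by ring
    have hPk : P k = p i j := rfl
    rw [hPk]
    rcases Nat.lt_or_ge (j + 1) m with hcase | hcase
    · have hk1 : k + 1 = m * i + (j + 1) := by omega
      have hd := divmod hm i (j + 1) hcase
      have hP1 : P (k + 1) = p i (j + 1) := by
        rw [hP]; simp only []; rw [hk1, hd.1, hd.2]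
      rw [hP1]
      have hle := (coreMono h (le_refl i) (show j ≤ j + 1 by omega) him hjm him hcase).1
      have hne : p i j ≠ p i (j + 1) := fun he => by
        have := h.2.1 _ _ _ _ him hjm him hcase he; omega
      omega
    · have hjeq : j = m - 1 := by omega
      have hk1 : k + 1 = m * (i + 1) + 0 := by omega
      have him1 : i + 1 < m := by
        by_contra hc
        have h2 : m * m ≤ m * (i + 1) := Nat.mul_le_mul_left m (by omega)
        omega
      have hd := divmod hm (i + 1) 0 hm
      have hP1 : P (k + 1) = p (i + 1) 0 := by
        rw [hP]; simp only []; rw [hk1, hd.1, hd.2]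
      rw [hP1, hjeq]
      exact hbits i him1
  have hmono : ∀ a b, a < b → b < m * m → P a < P b := chainLt hstep
  have hset : (Finset.range m ×ˢ Finset.range m).image (fun z => p z.1 z.2) =
      (Finset.range (m * m)).image P := by
    ext a
    simp only [Finset.mem_image, Finset.mem_product, Finset.mem_range]
    constructor
    · rintro ⟨⟨i, j⟩, ⟨hi, hj⟩, rfl⟩
      refine ⟨m * i + j, ?_, ?_⟩
      · have h2 : m * (i + 1) ≤ m * m := Nat.mul_le_mul_left m (by omega)
        have hmm : m * (i + 1) = m * i + m := by ring
        omega
      · have hd := divmod hm i j hj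
        rw [hP]; simp only []; rw [hd.1, hd.2]
    · rintro ⟨k, hk, rfl⟩
      exact ⟨(k / m, k % m), ⟨by rw [Nat.div_lt_iff_lt_mul hm]; omega, Nat.mod_lt _ hm⟩, rfl⟩
  intro i j hi hj
  have hidx : m * i + j < m * m := by
    have h2 : m * (i + 1) ≤ m * m := Nat.mul_le_mul_left m (by omega)
    have hmm : m * (i + 1) = m * i + m := by ring
    omega
  rw [hset, enum_image hmono _ hidx]
  have hd := divmod hm i j hj
  rw [hP]; simp only []; rw [hd.1, hd.2]

end Core

lemma image_swap {m : ℕ} (p : ℕ → ℕ → ℕ) :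
    (Finset.range m ×ˢ Finset.range m).image (fun z => p z.2 z.1) =
    (Finset.range m ×ˢ Finset.range m).image (fun z => p z.1 z.2) := by
  ext a
  simp only [Finset.mem_image, Finset.mem_product, Finset.mem_range]
  constructor
  · rintro ⟨⟨i, j⟩, ⟨hi, hj⟩, rfl⟩; exact ⟨(j, i), ⟨hj, hi⟩, rfl⟩
  · rintro ⟨⟨i, j⟩, ⟨hi, hj⟩, rfl⟩; exact ⟨(j, i), ⟨hj, hi⟩, rfl⟩

lemma coreUnique {m : ℕ} {p q : ℕ → ℕ → ℕ} (hm : 0 < m) (h : Hyp m p q) :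
    (∀ i j, i < m → j < m →
        p i j = enum ((Finset.range m ×ˢ Finset.range m).image fun z => p z.1 z.2)
          (m * i + j) ∧
        q i j = enum ((Finset.range m ×ˢ Finset.range m).image fun z => q z.1 z.2)
          (m * j + i)) ∨
    (∀ i j, i < m → j < m →
        p i j = enum ((Finset.range m ×ˢ Finset.range m).image fun z => p z.1 z.2)
          (m * j + i) ∧
        q i j = enum ((Finset.range m ×ˢ Finset.range m).image fun z => q z.1 z.2)
          (m * i + j)) := by
  rcases Nat.lt_or_ge m 2 with hm2 | hm2
  · -- m = 1
    have hm1 : m = 1 := by omega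
    subst hm1
    left
    intro i j hi hj
    have hi0 : i = 0 := by omega
    have hj0 : j = 0 := by omega
    subst hi0; subst hj0
    constructor
    · have : (Finset.range 1 ×ˢ Finset.range 1).image (fun z => p z.1 z.2) = {p 0 0} := by
        rw [Finset.range_one, Finset.singleton_product_singleton, Finset.image_singleton]
      rw [this]
      simp [enum, Finset.sort_singleton]
    · have : (Finset.range 1 ×ˢ Finset.range 1).image (fun z => q z.1 z.2) = {q 0 0} := by
        rw [Finset.range_one, Finset.singleton_product_singleton, Finset.image_singleton]
      rw [this]
      simp [enum, Finset.sort_singleton]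
  · by_cases hA0 : p 0 (m - 1) < p 1 0
    · -- p is "lex", q is "colex"
      left
      have allA : ∀ i, i + 1 < m → p i (m - 1) < p (i + 1) 0 :=
        fun i hi => (coreAllEq h hi).2 hA0
      have notA'0 : ¬ p (m - 1) 0 < p 0 1 := by
        intro hc
        have h1 := (coreMono h (show 1 ≤ m - 1 by omega) (le_refl 0)
          (by omega) (by omega) (by omega) (by omega)).1
        have h2 := (coreMono h (le_refl 0) (show 1 ≤ m - 1 by omega)
          (by omega) (by omega) (by omega) (by omega)).1
        omega
      have allnA' : ∀ j, j + 1 < m → ¬ p (m - 1) j < p 0 (j + 1) :=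
        fun j hj hc => notA'0 ((coreAllEq h.transpose hj).1 hc)
      have allB' : ∀ j, j + 1 < m → q (m - 1) j < q 0 (j + 1) := by
        intro j hj
        have hflip := coreFlip h (show 0 < m - 1 by omega) (show j < j + 1 by omega)
          (by omega) hj (by omega) (by omega)
        have hne : p (m - 1) j ≠ p 0 (j + 1) := fun he => by
          have := h.2.1 _ _ _ _ (by omega) (by omega) (by omega) (by omega) he; omega
        have := allnA' j hj
        exact hflip.1 (by omega)
      intro i j hi hj
      refine ⟨coreLex h hm allA i j hi hj, ?_⟩
      have hq : q i j = enum ((Finset.range m ×ˢ Finset.range m).image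
          fun z => q z.2 z.1) (m * j + i) :=
        coreLex h.transpose.swap hm allB' j i hj hi
      rwa [image_swap q] at hq
    · -- q is "lex", p is "colex"
      right
      have allnA : ∀ i, i + 1 < m → ¬ p i (m - 1) < p (i + 1) 0 :=
        fun i hi hc => hA0 ((coreAllEq h hi).1 hc)
      have allB : ∀ i, i + 1 < m → q i (m - 1) < q (i + 1) 0 := by
        intro i hi
        have hflip := coreFlip h (show i < i + 1 by omega) (show 0 < m - 1 by omega)
          (by omega) (by omega) (by omega) (by omega)
        have hne : q i (m - 1) ≠ q (i + 1) 0 := fun he => by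
          have := h.2.2 _ _ _ _ (by omega) (by omega) (by omega) (by omega) he; omega
        have h1 : ¬ q (i + 1) 0 < q i (m - 1) := fun hc => (allnA i hi) (hflip.2 hc)
        omega
      have notB'0 : ¬ q (m - 1) 0 < q 0 1 := by
        intro hc
        have hB0 := allB 0 (by omega)
        norm_num at hB0
        have h1 := (coreMono h (show 1 ≤ m - 1 by omega) (le_refl 0)
          (by omega) (by omega) (by omega) (by omega)).2
        have h2 := (coreMono h (le_refl 0) (show 1 ≤ m - 1 by omega)
          (by omega) (by omega) (by omega) (by omega)).2
        omega
      have allnB' : ∀ j, j + 1 < m → ¬ q (m - 1) j < q 0 (j + 1) :=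
        fun j hj hc => notB'0 ((coreAllEq h.transpose.swap hj).1 hc)
      have allA' : ∀ j, j + 1 < m → p (m - 1) j < p 0 (j + 1) := by
        intro j hj
        have hflip := coreFlip h (show 0 < m - 1 by omega) (show j < j + 1 by omega)
          (by omega) hj (by omega) (by omega)
        have hne : p (m - 1) j ≠ p 0 (j + 1) := fun he => by
          have := h.2.1 _ _ _ _ (by omega) (by omega) (by omega) (by omega) he; omega
        have h1 : ¬ p 0 (j + 1) < p (m - 1) j := fun hc => (allnB' j hj) (hflip.1 hc)
        omega
      intro i j hi hj
      constructor
      · have hp : p i j = enum ((Finset.range m ×ˢ Finset.range m).image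
            fun z => p z.2 z.1) (m * j + i) :=
          coreLex h.transpose hm allA' j i hj hi
        rwa [image_swap p] at hp
      · exact coreLex h.swap hm allB i j hi hj


theorem myRamsey (r q : ℕ) : ∀ p, ∃ n : ℕ, ∀ χ : Finset ℕ → Fin r, ∀ T : Finset ℕ,
    n ≤ T.card → ∃ S : Finset ℕ, S ⊆ T ∧ S.card = p ∧ ∃ k : Fin r,
      ∀ X : Finset ℕ, X ⊆ S → X.card = q → χ X = k := by
  induction q with
  | zero =>
    intro p
    refine ⟨p, fun χ T hT => ?_⟩
    obtain ⟨S, hS, hcard⟩ := Finset.exists_subset_card_eq hT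
    refine ⟨S, hS, hcard, χ ∅, fun X _ hX => ?_⟩
    rw [Finset.card_eq_zero.1 hX]
  | succ q IH =>
    intro p
    -- auxiliary: pre-homogeneous sets of any size t
    have Aux : ∀ t : ℕ, ∃ n : ℕ, ∀ χ : Finset ℕ → Fin r, ∀ T : Finset ℕ,
        n ≤ T.card → ∃ s : Finset ℕ, s ⊆ T ∧ s.card = t ∧ ∃ f : ℕ → Fin r,
          ∀ x ∈ s, ∀ X : Finset ℕ, X ⊆ s.filter (x < ·) → X.card = q →
            χ (insert x X) = f x := by
      intro t
      induction t with
      | zero =>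
        exact ⟨0, fun χ T _ => ⟨∅, Finset.empty_subset _, Finset.card_empty,
          fun _ => χ ∅, fun x hx => absurd hx (Finset.notMem_empty x)⟩⟩
      | succ t IHt =>
        obtain ⟨nt, hAux⟩ := IHt
        obtain ⟨n', hRam⟩ := IH nt
        refine ⟨n' + 1, fun χ T hT => ?_⟩
        have hTne : T.Nonempty := Finset.card_pos.1 (by omega)
        set x := T.min' hTne with hx
        have hxT : x ∈ T := T.min'_mem hTne
        have hT' : n' ≤ (T.erase x).card := by
          rw [Finset.card_erase_of_mem hxT]; omega
        obtain ⟨S₁, hS₁T, hS₁card, k₁, hk₁⟩ := hRam (fun Y => χ (insert x Y)) _ hT'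
        obtain ⟨s, hs, hscard, f, hf⟩ := hAux χ S₁ (le_of_eq hS₁card.symm)
        have hxs : x ∉ s := fun h => (Finset.mem_erase.1 (hS₁T (hs h))).1 rfl
        refine ⟨insert x s, ?_, ?_, Function.update f x k₁, ?_⟩
        · intro z hz
          rcases Finset.mem_insert.1 hz with rfl | hz
          · exact hxT
          · exact Finset.erase_subset _ _ (hS₁T (hs hz))
        · rw [Finset.card_insert_of_notMem hxs, hscard]
        · intro y hy X hX hXcard
          rcases Finset.mem_insert.1 hy with rfl | hy
          · rw [Function.update_self]
            refine hk₁ X (fun z hz => ?_) hXcard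
            have hz' := hX hz
            rw [Finset.mem_filter] at hz'
            rcases Finset.mem_insert.1 hz'.1 with rfl | h
            · exact absurd hz'.2 (lt_irrefl _)
            · exact hs h
          · have hyx : y ≠ x := fun h => hxs (h ▸ hy)
            rw [Function.update_of_ne hyx]
            refine hf y hy X (fun z hz => ?_) hXcard
            have hz' := hX hz
            rw [Finset.mem_filter] at hz' ⊢
            rcases Finset.mem_insert.1 hz'.1 with rfl | h
            · -- z = x, but y < z and x = min T, y ∈ T
              have hyT : y ∈ T := Finset.erase_subset _ _ (hS₁T (hs hy))
              have : x ≤ y := T.min'_le y hyT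
              omega
            · exact ⟨h, hz'.2⟩
    obtain ⟨n, hAux⟩ := Aux (r * p + 1)
    refine ⟨n, fun χ T hT => ?_⟩
    rcases Nat.eq_zero_or_pos r with rfl | hr
    · exact (χ ∅).elim0
    obtain ⟨s, hsT, hscard, f, hf⟩ := hAux χ T hT
    have hpig : ∃ k ∈ (Finset.univ : Finset (Fin r)), p < (s.filter (f · = k)).card := by
      apply Finset.exists_lt_card_fiber_of_mul_lt_card_of_maps_to
      · exact fun a _ => Finset.mem_univ _
      · rw [Finset.card_univ, Fintype.card_fin, hscard]; omega
    obtain ⟨k, _, hk⟩ := hpig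
    obtain ⟨S, hSsub, hScard⟩ := Finset.exists_subset_card_eq (le_of_lt hk)
    have hSs : S ⊆ s := hSsub.trans (Finset.filter_subset _ _)
    refine ⟨S, hSs.trans hsT, hScard, k, fun X hXS hXcard => ?_⟩
    have hXne : X.Nonempty := Finset.card_pos.1 (by omega)
    set y := X.min' hXne with hy
    have hyX : y ∈ X := X.min'_mem hXne
    have hfy : f y = k := by
      have := hSsub (hXS hyX)
      rw [Finset.mem_filter] at this
      exact this.2
    have herase : X.erase y ⊆ s.filter (y < ·) := by
      intro z hz
      rw [Finset.mem_erase] at hz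
      rw [Finset.mem_filter]
      exact ⟨hSs (hXS hz.2), lt_of_le_of_ne (X.min'_le z hz.2) (Ne.symm hz.1)⟩
    have hcarderase : (X.erase y).card = q := by
      rw [Finset.card_erase_of_mem hyX, hXcard]; omega
    have := hf y (hSs (hXS hyX)) (X.erase y) herase hcarderase
    rwa [Finset.insert_erase hyX, hfy] at this

lemma mulIdx {N a b : ℕ} (ha : a < N) (hb : b < N) : N * a + b < N * N := by
  have h2 : N * (a + 1) ≤ N * N := Nat.mul_le_mul_left N (by omega)
  have h3 : N * (a + 1) = N * a + N := by ring
  omega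

lemma keyIdx {l i j i' j' : ℕ} (hi : i < l) (hj : j < l) (hi' : i' < l) (hj' : j' < l) :
    (i ≤ i' ∧ j ≤ j') ↔ (l * i + j ≤ l * i' + j' ∧ l * j + i ≤ l * j' + i') := by
  constructor
  · rintro ⟨h1, h2⟩
    exact ⟨Nat.add_le_add (Nat.mul_le_mul_left l h1) h2,
      Nat.add_le_add (Nat.mul_le_mul_left l h2) h1⟩
  · rintro ⟨h1, h2⟩
    constructor
    · by_contra hc
      have h3 : l * (i' + 1) ≤ l * i := Nat.mul_le_mul_left l (by omega)
      have h4 : l * (i' + 1) = l * i' + l := by ring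
      omega
    · by_contra hc
      have h3 : l * (j' + 1) ≤ l * j := Nat.mul_le_mul_left l (by omega)
      have h4 : l * (j' + 1) = l * j' + l := by ring
      omega

lemma mulIdxInj {N a b a' b' : ℕ} (hN : 0 < N) (hb : b < N) (hb' : b' < N)
    (h : N * a + b = N * a' + b') : a = a' ∧ b = b' := by
  have h1 := divmod hN a b hb
  have h2 := divmod hN a' b' hb'
  rw [h] at h1
  omega


/-- (the `t = 2` case of the subposet Ramsey conjecture)
For all `r, m, l > 0` there is `n` such that for every `r`-coloring of the subsets of
the grid `Fin n × Fin n` (in particular of those subposets isomorphic to the grid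
`m×m`, i.e. images of order embeddings of `Fin m × Fin m`), there is a subposet
isomorphic to `l×l` all of whose `m×m` subposets get the same color. -/
theorem stmt_13 (r m l : ℕ) (hr : 0 < r) (hm : 0 < m) (hl : 0 < l) :
    ∃ n : ℕ, ∀ c : Set (Fin n × Fin n) → Fin r,
      ∃ F : Fin l × Fin l → Fin n × Fin n,
        (∀ x y : Fin l × Fin l, x ≤ y ↔ F x ≤ F y) ∧
        ∃ k : Fin r,
          ∀ D : Fin m × Fin m → Fin n × Fin n,
            (∀ x y : Fin m × Fin m, x ≤ y ↔ D x ≤ D y) →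
            Set.range D ⊆ Set.range F →
            c (Set.range D) = k := by
  set M := m * m with hM
  set L := l * l with hL
  obtain ⟨n₀, hRam⟩ := myRamsey r (2 * M) (2 * L)
  refine ⟨n₀ + 1, ?_⟩
  set n := n₀ + 1 with hn
  intro c
  have hnpos : 0 < n := by omega
  set ι : ℕ → Fin n := fun x => ⟨x % n, Nat.mod_lt _ hnpos⟩ with hι
  have hιval : ∀ x, x < n → (ι x).val = x := fun x hx => Nat.mod_eq_of_lt hx
  set core : Finset ℕ → Set (Fin n × Fin n) := fun X =>
    {y | ∃ i j : ℕ, i < m ∧ j < m ∧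
      y = (ι (enum X (m * i + j)), ι (enum X (M + (m * j + i))))} with hcore
  obtain ⟨S, hSsub, hScard, k, hmono⟩ := hRam (fun X => c (core X)) (Finset.range n)
    (by rw [Finset.card_range]; omega)
  set g : ℕ → ℕ := enum S with hg
  have hgS : ∀ t, t < 2 * L → g t ∈ S := fun t ht => enum_mem (by omega)
  have hglt : ∀ t, t < 2 * L → g t < n := fun t ht =>
    Finset.mem_range.1 (hSsub (hgS t ht))
  have hgmono : ∀ a b, a < b → b < 2 * L → g a < g b := fun a b hab hb =>
    enum_lt_enum hab (by omega)
  have hgle : ∀ a b, a < 2 * L → b < 2 * L → (g a ≤ g b ↔ a ≤ b) := by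
    intro a b ha hb
    constructor
    · intro h
      by_contra hc
      have := hgmono b a (by omega) ha
      omega
    · intro h
      rcases Nat.eq_or_lt_of_le h with rfl | h'
      · exact le_refl _
      · exact le_of_lt (hgmono a b h' hb)
  have hLpos : 0 < L := Nat.mul_pos hl hl
  have hidxL : ∀ {i j : ℕ}, i < l → j < l → l * i + j < L := fun hi hj => mulIdx hi hj
  set F : Fin l × Fin l → Fin n × Fin n := fun z =>
    (ι (g (l * z.1.val + z.2.val)), ι (g (L + (l * z.2.val + z.1.val)))) with hF
  have hF1 : ∀ z : Fin l × Fin l, ((F z).1 : ℕ) = g (l * z.1.val + z.2.val) :=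
    fun z => hιval _ (hglt _ (by have := hidxL z.1.isLt z.2.isLt; omega))
  have hF2 : ∀ z : Fin l × Fin l, ((F z).2 : ℕ) = g (L + (l * z.2.val + z.1.val)) :=
    fun z => hιval _ (hglt _ (by have := hidxL z.2.isLt z.1.isLt; omega))
  have hFemb : ∀ x y : Fin l × Fin l, x ≤ y ↔ F x ≤ F y := by
    intro x y
    rw [Prod.le_def, Prod.le_def, Fin.le_def, Fin.le_def, Fin.le_def, Fin.le_def,
      hF1, hF1, hF2, hF2]
    rw [hgle _ _ (by have := hidxL x.1.isLt x.2.isLt; omega)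
        (by have := hidxL y.1.isLt y.2.isLt; omega),
      hgle _ _ (by have := hidxL x.2.isLt x.1.isLt; omega)
        (by have := hidxL y.2.isLt y.1.isLt; omega)]
    have := keyIdx x.1.isLt x.2.isLt y.1.isLt y.2.isLt
    constructor
    · rintro ⟨h1, h2⟩
      have := this.1 ⟨h1, h2⟩
      omega
    · rintro ⟨h1, h2⟩
      have h3 : l * x.1.val + x.2.val ≤ l * y.1.val + y.2.val := h1
      have h4 : l * x.2.val + x.1.val ≤ l * y.2.val + y.1.val := by omega
      exact this.2 ⟨h3, h4⟩
  refine ⟨F, hFemb, k, ?_⟩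
  intro D hD hsub
  have hDinj : Function.Injective D := by
    intro x y hxy
    exact le_antisymm ((hD x y).2 (le_of_eq hxy)) ((hD y x).2 (le_of_eq hxy.symm))
  have hGex : ∀ x, ∃ z, F z = D x := fun x => hsub (Set.mem_range_self x)
  choose G hG using hGex
  set P : ℕ → ℕ → ℕ := fun i j =>
    if h : i < m ∧ j < m then ((D (⟨i, h.1⟩, ⟨j, h.2⟩)).1 : ℕ) else 0 with hP
  set Q : ℕ → ℕ → ℕ := fun i j =>
    if h : i < m ∧ j < m then ((D (⟨i, h.1⟩, ⟨j, h.2⟩)).2 : ℕ) else 0 with hQ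
  have hPval : ∀ i j (hi : i < m) (hj : j < m),
      P i j = ((D (⟨i, hi⟩, ⟨j, hj⟩)).1 : ℕ) := by
    intro i j hi hj; rw [hP]; simp only []; rw [dif_pos ⟨hi, hj⟩]
  have hQval : ∀ i j (hi : i < m) (hj : j < m),
      Q i j = ((D (⟨i, hi⟩, ⟨j, hj⟩)).2 : ℕ) := by
    intro i j hi hj; rw [hQ]; simp only []; rw [dif_pos ⟨hi, hj⟩]
  have hDrep1 : ∀ x, ((D x).1 : ℕ) = g (l * (G x).1.val + (G x).2.val) := by
    intro x; rw [← hG x, hF1]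
  have hDrep2 : ∀ x, ((D x).2 : ℕ) = g (L + (l * (G x).2.val + (G x).1.val)) := by
    intro x; rw [← hG x, hF2]
  have hval1inj : ∀ x y, ((D x).1 : ℕ) = ((D y).1 : ℕ) → x = y := by
    intro x y he
    rw [hDrep1 x, hDrep1 y] at he
    have hix := hidxL (G x).1.isLt (G x).2.isLt
    have hiy := hidxL (G y).1.isLt (G y).2.isLt
    have hidx : l * (G x).1.val + (G x).2.val = l * (G y).1.val + (G y).2.val := by
      by_contra hc
      rcases Nat.lt_or_ge (l * (G x).1.val + (G x).2.val)
        (l * (G y).1.val + (G y).2.val) with h' | h'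
      · have := hgmono _ _ h' (by omega); omega
      · have := hgmono _ _ (by omega : l * (G y).1.val + (G y).2.val
          < l * (G x).1.val + (G x).2.val) (by omega); omega
    obtain ⟨h1, h2⟩ := mulIdxInj hl (G x).2.isLt (G y).2.isLt hidx
    have hGeq : G x = G y := Prod.ext (Fin.ext h1) (Fin.ext h2)
    exact hDinj (by rw [← hG x, ← hG y, hGeq])
  have hval2inj : ∀ x y, ((D x).2 : ℕ) = ((D y).2 : ℕ) → x = y := by
    intro x y he
    rw [hDrep2 x, hDrep2 y] at he
    have hix := hidxL (G x).2.isLt (G x).1.isLt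
    have hiy := hidxL (G y).2.isLt (G y).1.isLt
    have hidx : l * (G x).2.val + (G x).1.val = l * (G y).2.val + (G y).1.val := by
      by_contra hc
      rcases Nat.lt_or_ge (l * (G x).2.val + (G x).1.val)
        (l * (G y).2.val + (G y).1.val) with h' | h'
      · have := hgmono _ _ (by omega : L + (l * (G x).2.val + (G x).1.val)
          < L + (l * (G y).2.val + (G y).1.val)) (by omega); omega
      · rcases Nat.eq_or_lt_of_le h' with h'' | h''
        · omega
        · have := hgmono _ _ (by omega : L + (l * (G y).2.val + (G y).1.val)
            < L + (l * (G x).2.val + (G x).1.val)) (by omega); omega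
    obtain ⟨h1, h2⟩ := mulIdxInj hl (G x).1.isLt (G y).1.isLt hidx
    have hGeq : G x = G y := Prod.ext (Fin.ext h2) (Fin.ext h1)
    exact hDinj (by rw [← hG x, ← hG y, hGeq])
  have hHyp : Hyp m P Q := by
    refine ⟨?_, ?_, ?_⟩
    · intro i j i' j' hi hj hi' hj'
      rw [hPval i j hi hj, hPval i' j' hi' hj', hQval i j hi hj, hQval i' j' hi' hj']
      have := hD (⟨i, hi⟩, ⟨j, hj⟩) (⟨i', hi'⟩, ⟨j', hj'⟩)
      rw [Prod.le_def, Prod.le_def, Fin.le_def, Fin.le_def, Fin.le_def, Fin.le_def] at this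
      exact this
    · intro i j i' j' hi hj hi' hj' he
      rw [hPval i j hi hj, hPval i' j' hi' hj'] at he
      have heq := hval1inj _ _ he
      obtain ⟨h1, h2⟩ := Prod.ext_iff.1 heq
      exact ⟨by simpa using Fin.val_eq_of_eq h1, by simpa using Fin.val_eq_of_eq h2⟩
    · intro i j i' j' hi hj hi' hj' he
      rw [hQval i j hi hj, hQval i' j' hi' hj'] at he
      have heq := hval2inj _ _ he
      obtain ⟨h1, h2⟩ := Prod.ext_iff.1 heq
      exact ⟨by simpa using Fin.val_eq_of_eq h1, by simpa using Fin.val_eq_of_eq h2⟩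
  set A : Finset ℕ := (Finset.range m ×ˢ Finset.range m).image (fun z => P z.1 z.2) with hA
  set B : Finset ℕ := (Finset.range m ×ˢ Finset.range m).image (fun z => Q z.1 z.2) with hB
  have hAcard : A.card = M := by
    rw [hA, Finset.card_image_of_injOn, Finset.card_product, Finset.card_range, ← hM]
    intro z hz w hw he
    simp only [Finset.mem_coe, Finset.mem_product, Finset.mem_range] at hz hw
    obtain ⟨h1, h2⟩ := hHyp.2.1 z.1 z.2 w.1 w.2 hz.1 hz.2 hw.1 hw.2 he
    exact Prod.ext h1 h2
  have hBcard : B.card = M := by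
    rw [hB, Finset.card_image_of_injOn, Finset.card_product, Finset.card_range, ← hM]
    intro z hz w hw he
    simp only [Finset.mem_coe, Finset.mem_product, Finset.mem_range] at hz hw
    obtain ⟨h1, h2⟩ := hHyp.2.2 z.1 z.2 w.1 w.2 hz.1 hz.2 hw.1 hw.2 he
    exact Prod.ext h1 h2
  have hPrep : ∀ i j, i < m → j < m → ∃ t, t < L ∧ P i j = g t := by
    intro i j hi hj
    refine ⟨_, hidxL (G (⟨i, hi⟩, ⟨j, hj⟩)).1.isLt (G (⟨i, hi⟩, ⟨j, hj⟩)).2.isLt, ?_⟩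
    rw [hPval i j hi hj, hDrep1]
  have hQrep : ∀ i j, i < m → j < m → ∃ t, L ≤ t ∧ t < 2 * L ∧ Q i j = g t := by
    intro i j hi hj
    have h0 := hidxL (G (⟨i, hi⟩, ⟨j, hj⟩)).2.isLt (G (⟨i, hi⟩, ⟨j, hj⟩)).1.isLt
    refine ⟨L + (l * (G (⟨i, hi⟩, ⟨j, hj⟩)).2.val + (G (⟨i, hi⟩, ⟨j, hj⟩)).1.val),
      by omega, by omega, ?_⟩
    rw [hQval i j hi hj, hDrep2]
  have hAB : ∀ a ∈ A, ∀ b ∈ B, a < b := by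
    intro a ha b hb
    rw [hA, Finset.mem_image] at ha
    rw [hB, Finset.mem_image] at hb
    obtain ⟨z, hz, rfl⟩ := ha
    obtain ⟨w, hw, rfl⟩ := hb
    rw [Finset.mem_product, Finset.mem_range, Finset.mem_range] at hz hw
    obtain ⟨t, ht, hPt⟩ := hPrep z.1 z.2 hz.1 hz.2
    obtain ⟨s, hs1, hs2, hQs⟩ := hQrep w.1 w.2 hw.1 hw.2
    rw [hPt, hQs]
    exact hgmono t s (by omega) hs2
  have hXsub : A ∪ B ⊆ S := by
    intro a ha
    rcases Finset.mem_union.1 ha with ha | ha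
    · rw [hA, Finset.mem_image] at ha
      obtain ⟨z, hz, rfl⟩ := ha
      rw [Finset.mem_product, Finset.mem_range, Finset.mem_range] at hz
      obtain ⟨t, ht, hPt⟩ := hPrep z.1 z.2 hz.1 hz.2
      rw [hPt]; exact hgS t (by omega)
    · rw [hB, Finset.mem_image] at ha
      obtain ⟨z, hz, rfl⟩ := ha
      rw [Finset.mem_product, Finset.mem_range, Finset.mem_range] at hz
      obtain ⟨t, _, ht, hQt⟩ := hQrep z.1 z.2 hz.1 hz.2
      rw [hQt]; exact hgS t ht
  have hdisj : Disjoint A B := by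
    rw [Finset.disjoint_left]
    intro a ha hb
    exact absurd rfl (Nat.ne_of_lt (hAB a ha a hb))
  have hXcard : (A ∪ B).card = 2 * M := by
    rw [Finset.card_union_of_disjoint hdisj, hAcard, hBcard]; omega
  have hχ := hmono (A ∪ B) hXsub hXcard
  have henum1 : ∀ t, t < M → enum (A ∪ B) t = enum A t := by
    intro t ht
    exact enum_union_left hAB (by omega)
  have henum2 : ∀ s, enum (A ∪ B) (M + s) = enum B s := by
    intro s
    have := enum_union_right hAB s
    rwa [hAcard] at this
  have hidxM : ∀ {i j : ℕ}, i < m → j < m → m * i + j < M := fun hi hj => mulIdx hi hj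
  have hDcomp : ∀ x : Fin m × Fin m,
      D x = (ι (P x.1.val x.2.val), ι (Q x.1.val x.2.val)) := by
    intro x
    have h1 : P x.1.val x.2.val = ((D x).1 : ℕ) := by
      rw [hPval _ _ x.1.isLt x.2.isLt]
    have h2 : Q x.1.val x.2.val = ((D x).2 : ℕ) := by
      rw [hQval _ _ x.1.isLt x.2.isLt]
    refine Prod.ext (Fin.ext ?_) (Fin.ext ?_)
    · rw [h1]; exact (hιval _ (D x).1.isLt).symm
    · rw [h2]; exact (hιval _ (D x).2.isLt).symm
  have hgoal : core (A ∪ B) = Set.range D := by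
    rcases coreUnique hm hHyp with hbr | hbr
    · ext y
      constructor
      · rintro ⟨i, j, hi, hj, rfl⟩
        refine ⟨(⟨i, hi⟩, ⟨j, hj⟩), ?_⟩
        rw [hDcomp]
        have hb := hbr i j hi hj
        rw [henum1 _ (hidxM hi hj), henum2, ← hb.1, ← hb.2]
      · rintro ⟨x, rfl⟩
        refine ⟨x.1.val, x.2.val, x.1.isLt, x.2.isLt, ?_⟩
        rw [hDcomp]
        have hb := hbr x.1.val x.2.val x.1.isLt x.2.isLt
        rw [henum1 _ (hidxM x.1.isLt x.2.isLt), henum2, ← hb.1, ← hb.2]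
    · ext y
      constructor
      · rintro ⟨i, j, hi, hj, rfl⟩
        refine ⟨(⟨j, hj⟩, ⟨i, hi⟩), ?_⟩
        rw [hDcomp]
        have hb := hbr j i hj hi
        rw [henum1 _ (hidxM hi hj), henum2, ← hb.1, ← hb.2]
      · rintro ⟨x, rfl⟩
        refine ⟨x.2.val, x.1.val, x.2.isLt, x.1.isLt, ?_⟩
        rw [hDcomp]
        have hb := hbr x.1.val x.2.val x.1.isLt x.2.isLt
        rw [henum1 _ (hidxM x.2.isLt x.1.isLt), henum2, ← hb.1, ← hb.2]
  rw [← hgoal]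
  exact hχ
end
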